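/- arXiv:1310.1950 — 5 statements merged into one kernel-verified Lean document; each statement's English description precedes it below -/
import Mathlib

section
/- Let X be a Banach space, L a compact Hausdorff space, and R : X → C(L) a bounded operator. If μ is a finite signed regular Borel measure on L with μ(L) = 0, then ‖R*(μ)‖ ≤ (1/2) · diam(φ^R[supp μ]) · ‖μ‖, where ‖μ‖ is the total variation norm, φ^R(p) = R*(δ_p), and diam is the norm-diameter in X*. -/
open MeasureTheory Set

/-- The support of a (nonnegative) measure: points all of whose neighborhoods
have nonzero measure. -/
def msupport {α : Type*} [TopologicalSpace α] [MeasurableSpace α]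
    (μ : Measure α) : Set α :=
  {x | ∀ U ∈ nhds x, μ U ≠ 0}

/-- `φ^R p = R^*(δ_p)`, the functional `x ↦ (R x)(p)`. -/
noncomputable def phiR {X L : Type*} [NormedAddCommGroup X] [NormedSpace ℝ X]
    [TopologicalSpace L] [CompactSpace L]
    (R : X →L[ℝ] C(L, ℝ)) (p : L) : StrongDual ℝ X :=
  (ContinuousMap.evalCLM ℝ p).comp R

lemma msupport_compl_null {α : Type*} [TopologicalSpace α] [MeasurableSpace α]
    [T2Space α] (μ : Measure α) (hreg : μ.Regular) :
    μ (msupport μ)ᶜ = 0 := by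
  have hopen : IsOpen (msupport μ)ᶜ := by
    rw [isOpen_iff_mem_nhds]
    intro x hx
    simp only [msupport, mem_compl_iff, mem_setOf_eq, not_forall] at hx
    obtain ⟨U, hU, hU0⟩ := hx
    push_neg at hU0
    filter_upwards [interior_mem_nhds.2 hU] with y hy
    simp only [msupport, mem_compl_iff, mem_setOf_eq, not_forall]
    exact ⟨U, mem_nhds_iff.2 ⟨interior U, interior_subset, isOpen_interior, hy⟩, by push_neg; exact hU0⟩
  have hK : ∀ K ⊆ (msupport μ)ᶜ, IsCompact K → μ K = 0 := by
    intro K hKs hK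
    have h : ∀ x ∈ K, ∃ U, U ∈ nhds x ∧ μ U = 0 := by
      intro x hx
      have := hKs hx
      simpa only [msupport, mem_compl_iff, mem_setOf_eq, not_forall, not_not,
        exists_prop] using this
    choose U hU hU0 using h
    obtain ⟨t, hcov⟩ := hK.elim_nhds_subcover' (fun x hx => U x hx) hU
    refine le_antisymm (le_trans (measure_mono hcov) ?_) zero_le
    refine le_trans (measure_biUnion_finset_le _ _) (le_of_eq (Finset.sum_eq_zero ?_))
    intro x _
    exact hU0 x x.2
  refine le_antisymm ?_ zero_le
  rw [hreg.innerRegular.measure_eq_iSup hopen]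
  exact iSup_le fun K => iSup_le fun hKs => iSup_le fun hKc => le_of_eq (hK K hKs hKc)

lemma isClosed_msupport {α : Type*} [TopologicalSpace α] [MeasurableSpace α]
    (μ : Measure α) : IsClosed (msupport μ) := by
  rw [← isOpen_compl_iff, isOpen_iff_mem_nhds]
  intro x hx
  simp only [msupport, mem_compl_iff, mem_setOf_eq, not_forall, not_not, exists_prop] at hx
  obtain ⟨U, hU, hU0⟩ := hx
  filter_upwards [interior_mem_nhds.2 hU] with y hy
  simp only [msupport, mem_compl_iff, mem_setOf_eq, not_forall, not_not, exists_prop]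
  exact ⟨U, mem_nhds_iff.2 ⟨interior U, interior_subset, isOpen_interior, hy⟩, hU0⟩

theorem stmt1 {X L : Type*} [NormedAddCommGroup X] [NormedSpace ℝ X] [CompleteSpace X]
    [TopologicalSpace L] [CompactSpace L] [T2Space L]
    [MeasurableSpace L] [BorelSpace L]
    (R : X →L[ℝ] C(L, ℝ))
    (μ : SignedMeasure L) (hreg : μ.totalVariation.Regular)
    (hμL : μ Set.univ = 0)
    (ψ : StrongDual ℝ X)
    (hψ : ∀ x : X, ψ x = ∫ p, R x p ∂μ.toJordanDecomposition.posPart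
      - ∫ p, R x p ∂μ.toJordanDecomposition.negPart) :
    ‖ψ‖ ≤ (1 / 2) * Metric.diam (phiR R '' msupport μ.totalVariation)
      * (μ.totalVariation Set.univ).toReal := by
  set P := μ.toJordanDecomposition.posPart with hP
  set N := μ.toJordanDecomposition.negPart with hN
  set tv := μ.totalVariation with htv
  set S := msupport tv with hSdef
  have htvadd : ∀ s : Set L, tv s = P s + N s := fun s => rfl
  have hScompl : tv Sᶜ = 0 := msupport_compl_null tv hreg
  have hPc : P Sᶜ = 0 := by
    have := htvadd Sᶜ; rw [hScompl] at this
    exact (add_eq_zero.mp this.symm).1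
  have hNc : N Sᶜ = 0 := by
    have := htvadd Sᶜ; rw [hScompl] at this
    exact (add_eq_zero.mp this.symm).2
  have hPu : (P univ).toReal = (N univ).toReal := by
    have h1 : μ.toJordanDecomposition.toSignedMeasure Set.univ = 0 := by
      rw [μ.toSignedMeasure_toJordanDecomposition]; exact hμL
    rw [JordanDecomposition.toSignedMeasure,
      Measure.toSignedMeasure_sub_apply MeasurableSet.univ] at h1
    simp only [Measure.real_def, ← hP, ← hN] at h1
    linarith
  have htvR : (tv Set.univ).toReal = (P univ).toReal + (N univ).toReal := by
    rw [htvadd univ, ENNReal.toReal_add (measure_ne_top _ _) (measure_ne_top _ _)]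
  have hdiam0 : 0 ≤ Metric.diam (phiR R '' S) := Metric.diam_nonneg
  refine ψ.opNorm_le_bound (by positivity) ?_
  intro x
  rcases Set.eq_empty_or_nonempty S with hSe | hSne
  · -- S empty: tv univ = 0
    have : tv Set.univ = 0 := by
      have : Sᶜ = univ := by rw [hSe, compl_empty]
      rw [← this]; exact hScompl
    have hP0 : P = 0 := by
      apply Measure.measure_univ_eq_zero.mp
      have := htvadd univ; rw [this] at *
      exact (add_eq_zero.mp (by rw [← htvadd univ]; exact ‹tv Set.univ = 0›)).1
    have hN0 : N = 0 := by
      apply Measure.measure_univ_eq_zero.mp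
      exact (add_eq_zero.mp (by rw [← htvadd univ]; exact ‹tv Set.univ = 0›)).2
    rw [hψ x, hP0, hN0]
    simp [integral_zero_measure]
    positivity
  · set f : L → ℝ := fun p => R x p with hf
    have hfc : Continuous f := (R x).continuous
    have hfi : ∀ (ν : Measure L) [IsFiniteMeasure ν], Integrable f ν := fun ν _ =>
      hfc.integrable_of_hasCompactSupport (HasCompactSupport.of_compactSpace f)
    have hScomp : IsCompact S := (isClosed_msupport tv).isCompact
    have hfS : IsCompact (f '' S) := hScomp.image hfc
    have hfSne : (f '' S).Nonempty := hSne.image f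
    set M := sSup (f '' S) with hM
    set m := sInf (f '' S) with hm
    obtain ⟨p0, hp0S, hp0⟩ := hfS.sSup_mem hfSne
    obtain ⟨p1, hp1S, hp1⟩ := hfS.sInf_mem hfSne
    have hbdd : ∀ p ∈ S, m ≤ f p ∧ f p ≤ M := fun p hp =>
      ⟨csInf_le hfS.isBounded.bddBelow ⟨p, hp, rfl⟩,
       le_csSup hfS.isBounded.bddAbove ⟨p, hp, rfl⟩⟩
    have hMm : M - m ≤ Metric.diam (phiR R '' S) * ‖x‖ := by
      have hphi : ∀ p, phiR R p x = f p := fun p => rfl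
      have hbddphi : Bornology.IsBounded (phiR R '' S) := by
        apply Metric.isBounded_closedBall (x := (0 : StrongDual ℝ X))
          (r := ‖R‖) |>.subset
        rintro - ⟨p, -, rfl⟩
        rw [Metric.mem_closedBall, dist_zero_right]
        refine le_trans (ContinuousLinearMap.opNorm_comp_le _ _) ?_
        calc ‖ContinuousMap.evalCLM ℝ p‖ * ‖R‖ ≤ 1 * ‖R‖ := by
              gcongr
              refine ContinuousLinearMap.opNorm_le_bound _ zero_le_one fun g => ?_
              simpa using g.norm_coe_le_norm p
          _ = ‖R‖ := one_mul _
      have hd : dist (phiR R p0) (phiR R p1) ≤ Metric.diam (phiR R '' S) :=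
        Metric.dist_le_diam_of_mem hbddphi ⟨p0, hp0S, rfl⟩ ⟨p1, hp1S, rfl⟩
      calc M - m = (phiR R p0 - phiR R p1) x := by
            simp [hphi, hp0, hp1, hM, hm]
        _ ≤ ‖(phiR R p0 - phiR R p1) x‖ := le_abs_self _
        _ ≤ ‖phiR R p0 - phiR R p1‖ * ‖x‖ := (phiR R p0 - phiR R p1).le_opNorm x
        _ ≤ Metric.diam (phiR R '' S) * ‖x‖ := by
            gcongr
            rw [← dist_eq_norm]; exact hd
    set c := (M + m) / 2 with hc
    have habs : ∀ p ∈ S, ‖f p - c‖ ≤ (M - m) / 2 := by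
      intro p hp
      rw [Real.norm_eq_abs, abs_le]
      obtain ⟨h1, h2⟩ := hbdd p hp
      constructor <;> [linarith; linarith]
    have haeP : ∀ᵐ p ∂P, p ∈ S := by
      rw [ae_iff]; exact measure_mono_null (fun p hp => hp) hPc
    have haeN : ∀ᵐ p ∂N, p ∈ S := by
      rw [ae_iff]; exact measure_mono_null (fun p hp => hp) hNc
    have hintP : ‖∫ p, (f p - c) ∂P‖ ≤ (M - m) / 2 * (P univ).toReal :=
      norm_integral_le_of_norm_le_const (haeP.mono fun p hp => habs p hp)
    have hintN : ‖∫ p, (f p - c) ∂N‖ ≤ (M - m) / 2 * (N univ).toReal :=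
      norm_integral_le_of_norm_le_const (haeN.mono fun p hp => habs p hp)
    have hsplit : ∀ (ν : Measure L) [IsFiniteMeasure ν],
        ∫ p, (f p - c) ∂ν = (∫ p, f p ∂ν) - (ν univ).toReal * c := by
      intro ν _
      rw [integral_sub (hfi ν) (integrable_const c), integral_const, smul_eq_mul, Measure.real_def]
    have hψ' : ψ x = (∫ p, f p ∂P) - ∫ p, f p ∂N := hψ x
    have hψx : ψ x = (∫ p, (f p - c) ∂P) - (∫ p, (f p - c) ∂N) := by
      rw [hψ', hsplit P, hsplit N, hPu]
      ring
    rw [hψx]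
    calc ‖(∫ p, (f p - c) ∂P) - (∫ p, (f p - c) ∂N)‖
        ≤ ‖∫ p, (f p - c) ∂P‖ + ‖∫ p, (f p - c) ∂N‖ := norm_sub_le _ _
      _ ≤ (M - m) / 2 * (P univ).toReal + (M - m) / 2 * (N univ).toReal :=
          add_le_add hintP hintN
      _ = (M - m) / 2 * (tv Set.univ).toReal := by rw [htvR]; ring
      _ ≤ 1 / 2 * Metric.diam (phiR R '' S) * (tv Set.univ).toReal * ‖x‖ := by
          have h0 : 0 ≤ (tv Set.univ).toReal := ENNReal.toReal_nonneg
          nlinarith [hMm]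
end

section
/- Let I be a compact line (a linearly ordered set compact in its order topology) and H a nonempty closed subset of I. For every finite signed regular Borel measure μ on I there exists a finite signed regular Borel measure ν on I such that: (A) supp ν ⊆ H; (B) ν(I) = μ(I); (C) ‖ν‖ ≤ ‖μ‖ (total variation norms); (D) ν([min I, t]) = μ([min I, t]) for every t ∈ H with t ≠ max H. -/
open MeasureTheory Set

section Aux

open scoped Classical

variable {I : Type*} [LinearOrder I] [TopologicalSpace I] [OrderTopology I]
    [CompactSpace I]

/-- The projection onto a closed set `H`: the least element of `H` above `x`,
or `m` if there is none. -/
noncomputable def projH (H : Set I) (hHcl : IsClosed H) (m : I) (x : I) : I :=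
  if h : (H ∩ Ici x).Nonempty then
    ((hHcl.inter isClosed_Ici).isCompact.exists_isLeast h).choose
  else m

variable {H : Set I} {m : I} (hHcl : IsClosed H)

lemma projH_isLeast {x : I} (h : (H ∩ Ici x).Nonempty) :
    IsLeast (H ∩ Ici x) (projH H hHcl m x) := by
  rw [projH, dif_pos h]
  exact ((hHcl.inter isClosed_Ici).isCompact.exists_isLeast h).choose_spec

lemma projH_mem (hm : IsGreatest H m) (x : I) : projH H hHcl m x ∈ H := by
  by_cases h : (H ∩ Ici x).Nonempty
  · exact (projH_isLeast hHcl h).1.1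
  · rw [projH, dif_neg h]; exact hm.1

lemma projH_le {x t : I} (ht : t ∈ H) (hx : x ≤ t) : projH H hHcl m x ≤ t :=
  (projH_isLeast hHcl ⟨t, ht, hx⟩).2 ⟨ht, hx⟩

lemma le_projH (hm : IsGreatest H m) {x : I} (hx : x ≤ m) : x ≤ projH H hHcl m x :=
  (projH_isLeast hHcl (m := m) ⟨m, hm.1, hx⟩).1.2

lemma projH_le_m (hm : IsGreatest H m) (x : I) : projH H hHcl m x ≤ m :=
  hm.2 (projH_mem hHcl hm x)

lemma projH_eq_self (hm : IsGreatest H m) {x : I} (hx : x ∈ H) : projH H hHcl m x = x :=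
  le_antisymm (projH_le hHcl hx le_rfl) (le_projH hHcl hm (hm.2 hx))

lemma projH_of_gt (hm : IsGreatest H m) {x : I} (hx : m < x) : projH H hHcl m x = m := by
  rw [projH, dif_neg]
  rintro ⟨t, htH, htx⟩
  exact absurd (hm.2 htH) (not_le.2 (lt_of_lt_of_le hx htx))

lemma projH_mono (hm : IsGreatest H m) : Monotone (projH H hHcl m) := by
  intro x y hxy
  rcases le_or_gt y m with h | h
  · exact projH_le hHcl (projH_mem hHcl hm y) (hxy.trans (le_projH hHcl hm h))
  · rw [projH_of_gt hHcl hm h]; exact projH_le_m hHcl hm x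

lemma lt_projH_of_lt (hm : IsGreatest H m) {x y : I} (hym : y < m) (hyx : y < x) : y < projH H hHcl m x := by
  rcases le_or_gt x m with h | h
  · exact lt_of_lt_of_le hyx (le_projH hHcl hm h)
  · rw [projH_of_gt hHcl hm h]; exact hym

lemma projH_preimage_Iic (hm : IsGreatest H m) {t : I} (ht : t ∈ H) (htm : t < m) :
    projH H hHcl m ⁻¹' Iic t = Iic t := by
  ext x
  constructor
  · intro hfx
    by_contra hx
    rw [mem_Iic] at hx; push_neg at hx
    exact absurd (mem_Iic.1 hfx) (not_le.2 (lt_projH_of_lt hHcl hm htm hx))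
  · intro hx
    exact mem_Iic.2 (projH_le hHcl ht (mem_Iic.1 hx))

lemma projH_isClosed_preimage_Iic (hm : IsGreatest H m) {t : I} (ht : t ∈ H) :
    IsClosed (projH H hHcl m ⁻¹' Iic t) := by
  rcases lt_or_eq_of_le (hm.2 ht) with h | h
  · rw [projH_preimage_Iic hHcl hm ht h]; exact isClosed_Iic
  · have : projH H hHcl m ⁻¹' Iic t = univ := by
      ext x
      simp only [mem_preimage, mem_Iic, mem_univ, iff_true]
      rw [h]
      exact projH_le_m hHcl hm x
    rw [this]; exact isClosed_univ

lemma projH_measurable (hm : IsGreatest H m) [MeasurableSpace I] [BorelSpace I] :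
    Measurable (projH H hHcl m) := by
  apply measurable_of_isOpen
  intro U hU
  have key : projH H hHcl m ⁻¹' U = interior (projH H hHcl m ⁻¹' U) ∪ (U ∩ H) := by
    apply Subset.antisymm
    · intro x hx
      by_cases hxH : x ∈ H
      · right
        refine ⟨?_, hxH⟩
        rw [mem_preimage, projH_eq_self hHcl hm hxH] at hx
        exact hx
      · left
        rw [mem_interior]
        rcases lt_or_ge m x with hmx | hxm
        · refine ⟨Ioi m, fun y hy => ?_, isOpen_Ioi, hmx⟩
          rw [mem_preimage, projH_of_gt hHcl hm hy]
          rw [mem_preimage, projH_of_gt hHcl hm hmx] at hx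
          exact hx
        · have hxh : x < projH H hHcl m x :=
            lt_of_le_of_ne (le_projH hHcl hm hxm)
              (fun e => hxH (e ▸ projH_mem hHcl hm x))
          have hleast : IsLeast (H ∩ Ici x) (projH H hHcl m x) :=
            projH_isLeast hHcl ⟨m, hm.1, hxm⟩
          by_cases hne : (H ∩ Iic x).Nonempty
          · obtain ⟨g, hg⟩ := (hHcl.inter isClosed_Iic).isCompact.exists_isGreatest hne
            have hgx : g < x := lt_of_le_of_ne hg.1.2 (fun e => hxH (e ▸ hg.1.1))
            refine ⟨Ioo g (projH H hHcl m x), fun y hy => ?_, isOpen_Ioo, hgx, hxh⟩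
            have h1 : projH H hHcl m y ≤ projH H hHcl m x :=
              projH_le hHcl hleast.1.1 (le_of_lt hy.2)
            have h2 : projH H hHcl m x ≤ projH H hHcl m y := by
              by_contra hc; push_neg at hc
              have hyf : y ≤ projH H hHcl m y :=
                le_projH hHcl hm (le_trans (le_of_lt hy.2) (hm.2 hleast.1.1))
              rcases le_or_gt (projH H hHcl m y) x with hle | hgt
              · exact absurd (hg.2 ⟨projH_mem hHcl hm y, hle⟩)
                  (not_le.2 (lt_of_lt_of_le hy.1 hyf))
              · exact absurd (hleast.2 ⟨projH_mem hHcl hm y, le_of_lt hgt⟩)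
                  (not_le.2 hc)
            rw [mem_preimage, le_antisymm h1 h2]
            exact hx
          · refine ⟨Iio (projH H hHcl m x), fun y hy => ?_, isOpen_Iio, hxh⟩
            rw [mem_Iio] at hy
            have h1 : projH H hHcl m y ≤ projH H hHcl m x :=
              projH_le hHcl hleast.1.1 (le_of_lt hy)
            have h2 : projH H hHcl m x ≤ projH H hHcl m y := by
              by_contra hc; push_neg at hc
              have hyf : y ≤ projH H hHcl m y :=
                le_projH hHcl hm (le_trans hy.le (hm.2 hleast.1.1))
              rcases le_or_gt (projH H hHcl m y) x with hle | hgt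
              · exact hne ⟨projH H hHcl m y, projH_mem hHcl hm y, hle⟩
              · exact absurd (hleast.2 ⟨projH_mem hHcl hm y, hgt.le⟩) (not_le.2 hc)
            rw [mem_preimage, le_antisymm h1 h2]
            exact hx
    · rintro x (hx | ⟨hxU, hxH⟩)
      · exact interior_subset hx
      · rw [mem_preimage, projH_eq_self hHcl hm hxH]
        exact hxU
  rw [key]
  exact isOpen_interior.measurableSet.union
    (hU.measurableSet.inter hHcl.measurableSet)

lemma projH_isClosed_image (hm : IsGreatest H m) {K : Set I} (hK : IsCompact K) :
    IsClosed (projH H hHcl m '' K) := by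
  set S := projH H hHcl m '' K with hS
  have hSH : S ⊆ H := by rintro _ ⟨x, -, rfl⟩; exact projH_mem hHcl hm x
  apply isClosed_of_closure_subset
  intro y hy
  have hyH : y ∈ H := by
    have := closure_mono hSH hy
    rwa [hHcl.closure_eq] at this
  have hsplit : S = (S ∩ Iic y) ∪ (S ∩ Ioi y) := by
    rw [← inter_union_distrib_left, Iic_union_Ioi, inter_univ]
  rw [hsplit, closure_union] at hy
  rcases hy with hy | hy
  · -- approached from below (or attained)
    have hne : (S ∩ Iic y).Nonempty := by
      rw [← closure_nonempty_iff]; exact ⟨y, hy⟩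
    set T := K ∩ projH H hHcl m ⁻¹' Iic y with hT
    have hTcl : IsClosed T :=
      hK.isClosed.inter (projH_isClosed_preimage_Iic hHcl hm hyH)
    have hTne : T.Nonempty := by
      obtain ⟨s, ⟨x, hxK, rfl⟩, hsy⟩ := hne
      exact ⟨x, hxK, hsy⟩
    obtain ⟨z, hz⟩ := hTcl.isCompact.exists_isGreatest hTne
    have h1 : projH H hHcl m z ≤ y := hz.1.2
    have hsub : S ∩ Iic y ⊆ Iic (projH H hHcl m z) := by
      rintro _ ⟨⟨x, hxK, rfl⟩, hsy⟩
      exact projH_mono hHcl hm (hz.2 ⟨hxK, hsy⟩)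
    have h2 : y ≤ projH H hHcl m z :=
      (closure_minimal hsub isClosed_Iic) hy
    exact ⟨z, hz.1.1, le_antisymm h1 h2⟩
  · -- approached from above
    have hne : (S ∩ Ioi y).Nonempty := by
      rw [← closure_nonempty_iff]; exact ⟨y, hy⟩
    obtain ⟨s₀, hs₀S, hs₀y⟩ := hne
    have hym : y < m := lt_of_lt_of_le hs₀y (hm.2 (hSH hs₀S))
    set T := K ∩ Ioi y with hT
    have hmemT : ∀ x ∈ K, y < projH H hHcl m x → x ∈ T := by
      intro x hxK hyx
      refine ⟨hxK, ?_⟩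
      by_contra hc
      rw [mem_Ioi, not_lt] at hc
      exact absurd (projH_le hHcl hyH hc) (not_le.2 hyx)
    have hTne : T.Nonempty := by
      obtain ⟨x, hxK, rfl⟩ := hs₀S
      exact ⟨x, hmemT x hxK hs₀y⟩
    obtain ⟨z, hz⟩ := isClosed_closure.isCompact.exists_isLeast
      (hTne.mono subset_closure)
    have hzK : z ∈ K := closure_minimal inter_subset_left hK.isClosed hz.1
    have hzy : y ≤ z :=
      closure_minimal (fun w hw => le_of_lt hw.2) isClosed_Ici hz.1
    rcases eq_or_lt_of_le hzy with heq | hlt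
    · exact ⟨z, hzK, by rw [← heq, projH_eq_self hHcl hm hyH]⟩
    · exfalso
      have hfz : y < projH H hHcl m z := lt_projH_of_lt hHcl hm hym hlt
      have hsub : S ∩ Ioi y ⊆ Ici (projH H hHcl m z) := by
        rintro _ ⟨⟨x, hxK, rfl⟩, hsy⟩
        exact projH_mono hHcl hm (hz.2 (subset_closure (hmemT x hxK hsy)))
      have := closure_minimal hsub isClosed_Ici hy
      exact absurd this (not_le.2 hfz)

variable [MeasurableSpace I] [BorelSpace I]

lemma regular_of_le {μ σ : Measure I} [IsFiniteMeasure σ] (h : μ ≤ σ)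
    (hσ : σ.Regular) : μ.Regular := by
  haveI : IsFiniteMeasure μ :=
    ⟨lt_of_le_of_lt (Measure.le_iff'.1 h univ) (measure_lt_top σ univ)⟩
  haveI : μ.InnerRegularCompactLTTop := by
    constructor
    rintro A ⟨hA, -⟩ r hr
    have hε : μ A - r ≠ 0 := by
      rw [Ne, tsub_eq_zero_iff_le]
      exact hr.not_ge
    obtain ⟨K, hKA, hKcomp, hKclosed, hKd⟩ :=
      hA.exists_isCompact_isClosed_diff_lt (measure_ne_top σ A) hε
    refine ⟨K, hKA, hKcomp, ?_⟩
    by_contra hc; push_neg at hc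
    have h1 : μ A ≤ μ K + μ (A \ K) := by
      conv_lhs => rw [← union_diff_cancel hKA]
      exact measure_union_le _ _
    have h2 : μ (A \ K) ≤ σ (A \ K) := Measure.le_iff'.1 h _
    have h3 : μ A < r + (μ A - r) := by
      calc μ A ≤ μ K + μ (A \ K) := h1
        _ ≤ r + σ (A \ K) := add_le_add hc h2
        _ < r + (μ A - r) :=
            ENNReal.add_lt_add_left (hr.trans (measure_lt_top μ A)).ne hKd
    rw [add_tsub_cancel_of_le hr.le] at h3
    exact absurd h3 (lt_irrefl _)
  infer_instance

lemma projH_map_regular (hm : IsGreatest H m) {p : Measure I} [IsFiniteMeasure p] (hp : p.Regular) :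
    (p.map (projH H hHcl m)).Regular := by
  have hf := projH_measurable hHcl hm (I := I)
  haveI : IsFiniteMeasure (p.map (projH H hHcl m)) :=
    Measure.isFiniteMeasure_map p _
  haveI : p.Regular := hp
  haveI : p.InnerRegular := inferInstance
  haveI : (p.map (projH H hHcl m)).InnerRegularCompactLTTop := by
    constructor
    rintro A ⟨hA, -⟩ r hr
    rw [Measure.map_apply hf hA] at hr
    obtain ⟨K, hKA, hKcomp, hK⟩ := (hf hA).exists_lt_isCompact hr
    refine ⟨projH H hHcl m '' K, image_subset_iff.2 hKA,
      (projH_isClosed_image hHcl hm hKcomp).isCompact, ?_⟩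
    rw [Measure.map_apply hf (projH_isClosed_image hHcl hm hKcomp).measurableSet]
    exact hK.trans_le (measure_mono (subset_preimage_image _ _))
  infer_instance

end Aux

theorem stmt4 {I : Type*} [LinearOrder I] [TopologicalSpace I] [OrderTopology I]
    [CompactSpace I] [Nonempty I] [MeasurableSpace I] [BorelSpace I]
    (H : Set I) (hHne : H.Nonempty) (hHcl : IsClosed H)
    (m : I) (hm : IsGreatest H m)
    (μ : SignedMeasure I) (hreg : μ.totalVariation.Regular) :
    ∃ ν : SignedMeasure I, ν.totalVariation.Regular ∧
      msupport ν.totalVariation ⊆ H ∧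
      ν Set.univ = μ Set.univ ∧
      (ν.totalVariation Set.univ).toReal ≤ (μ.totalVariation Set.univ).toReal ∧
      ∀ t ∈ H, t ≠ m → ν (Set.Iic t) = μ (Set.Iic t) := by
  classical
  set f := projH H hHcl m with hf_def
  have hf : Measurable f := projH_measurable hHcl hm
  set p := μ.toJordanDecomposition.posPart with hp_def
  set q := μ.toJordanDecomposition.negPart with hq_def
  haveI : IsFiniteMeasure p := μ.toJordanDecomposition.posPart_finite
  haveI : IsFiniteMeasure q := μ.toJordanDecomposition.negPart_finite
  have htv : μ.totalVariation = p + q := rfl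
  have hμapp : ∀ s, MeasurableSet s → μ s = (p s).toReal - (q s).toReal := by
    intro s hs
    have e2 : μ = p.toSignedMeasure - q.toSignedMeasure :=
      μ.toSignedMeasure_toJordanDecomposition.symm
    conv_lhs => rw [e2]
    rw [Measure.toSignedMeasure_sub_apply hs, measureReal_def, measureReal_def]
  haveI : IsFiniteMeasure (p.map f) := Measure.isFiniteMeasure_map p f
  haveI : IsFiniteMeasure (q.map f) := Measure.isFiniteMeasure_map q f
  set ν : SignedMeasure I := (p.map f).toSignedMeasure - (q.map f).toSignedMeasure
    with hν_def
  have hνapp : ∀ s, MeasurableSet s →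
      ν s = (p (f ⁻¹' s)).toReal - (q (f ⁻¹' s)).toReal := by
    intro s hs
    rw [hν_def, Measure.toSignedMeasure_sub_apply hs,
      measureReal_def, measureReal_def, Measure.map_apply hf hs, Measure.map_apply hf hs]
  set σ := (μ.totalVariation).map f with hσ_def
  have hσapp : ∀ s, MeasurableSet s → σ s = p (f ⁻¹' s) + q (f ⁻¹' s) := by
    intro s hs
    rw [hσ_def, Measure.map_apply hf hs, htv, Measure.add_apply]
  haveI : IsFiniteMeasure μ.totalVariation := by rw [htv]; infer_instance
  have hσreg : σ.Regular := projH_map_regular hHcl hm hreg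
  have htvle : ∀ s, MeasurableSet s → ν.totalVariation s ≤ σ s := by
    intro s hs
    obtain ⟨i, hi₁, hi₂, hi₃, hpos, hneg⟩ := ν.toJordanDecomposition_spec
    have etv : ν.totalVariation =
        ν.toJordanDecomposition.posPart + ν.toJordanDecomposition.negPart := rfl
    rw [etv, Measure.add_apply, hpos, hneg,
      SignedMeasure.toMeasureOfZeroLE_apply _ hi₂ hi₁ hs,
      SignedMeasure.toMeasureOfLEZero_apply _ hi₃ hi₁.compl hs,
      hσapp s hs]
    refine add_le_add ?_ ?_
    · rw [← ENNReal.ofReal_coe_nnreal, NNReal.coe_mk]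
      have h1 : ν (i ∩ s) ≤ (p (f ⁻¹' (i ∩ s))).toReal := by
        rw [hνapp _ (hi₁.inter hs)]
        have : (0:ℝ) ≤ (q (f ⁻¹' (i ∩ s))).toReal := ENNReal.toReal_nonneg
        linarith
      calc ENNReal.ofReal (ν (i ∩ s))
          ≤ ENNReal.ofReal ((p (f ⁻¹' (i ∩ s))).toReal) := ENNReal.ofReal_le_ofReal h1
        _ = p (f ⁻¹' (i ∩ s)) := ENNReal.ofReal_toReal (measure_ne_top _ _)
        _ ≤ p (f ⁻¹' s) := measure_mono (preimage_mono inter_subset_right)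
    · rw [← ENNReal.ofReal_coe_nnreal, NNReal.coe_mk]
      have h1 : -ν (iᶜ ∩ s) ≤ (q (f ⁻¹' (iᶜ ∩ s))).toReal := by
        rw [hνapp _ (hi₁.compl.inter hs)]
        have : (0:ℝ) ≤ (p (f ⁻¹' (iᶜ ∩ s))).toReal := ENNReal.toReal_nonneg
        linarith
      calc ENNReal.ofReal (-ν (iᶜ ∩ s))
          ≤ ENNReal.ofReal ((q (f ⁻¹' (iᶜ ∩ s))).toReal) := ENNReal.ofReal_le_ofReal h1
        _ = q (f ⁻¹' (iᶜ ∩ s)) := ENNReal.ofReal_toReal (measure_ne_top _ _)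
        _ ≤ q (f ⁻¹' s) := measure_mono (preimage_mono inter_subset_right)
  have htvle' : ν.totalVariation ≤ σ := Measure.le_iff.2 htvle
  refine ⟨ν, ?_, ?_, ?_, ?_, ?_⟩
  · exact regular_of_le htvle' hσreg
  · intro x hx
    by_contra hxH
    have hnh : Hᶜ ∈ nhds x := hHcl.isOpen_compl.mem_nhds hxH
    have h0 : σ Hᶜ = 0 := by
      have hpre : f ⁻¹' Hᶜ = ∅ := by
        ext z
        simp only [mem_preimage, mem_compl_iff, mem_empty_iff_false, iff_false, not_not]
        exact projH_mem hHcl hm z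
      rw [hσapp _ hHcl.measurableSet.compl, hpre]
      simp
    exact (hx Hᶜ hnh) (le_antisymm (h0 ▸ htvle _ hHcl.measurableSet.compl) zero_le)
  · rw [hνapp _ MeasurableSet.univ, hμapp _ MeasurableSet.univ, preimage_univ]
  · have h1 := htvle _ MeasurableSet.univ
    rw [hσapp _ MeasurableSet.univ, preimage_univ] at h1
    have h2 : μ.totalVariation univ = p univ + q univ := by
      rw [htv, Measure.add_apply]
    rw [h2]
    exact ENNReal.toReal_mono (by rw [← h2]; exact measure_ne_top _ _) h1
  · intro t ht htm
    have htlt : t < m := lt_of_le_of_ne (hm.2 ht) htm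
    rw [hνapp _ measurableSet_Iic, hμapp _ measurableSet_Iic,
      hf_def, projH_preimage_Iic hHcl hm ht htlt]
end

section
/- Let L be a compact line with minimum 0 and P a clopen-partition of L (a finite set of right-isolated points of L containing max L). For every finite signed regular Borel measure μ on L there exists a finite signed regular Borel measure μ̃ on L such that: (i) μ̃(I) = 0 for every interval I of the induced partition P̄ of L into clopen intervals; (ii) μ̃([0,t]) = μ([0,t]) for all t ∈ L \ P; (iii) ‖μ̃‖ ≤ ‖μ‖ + 2·Σ_{b∈P} |μ([0,b])|. -/
open MeasureTheory Set
open scoped ENNReal NNReal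

/-- A point of a linear order is right-isolated if it is the maximum or has a successor. -/
def RightIsolated {L : Type*} [LinearOrder L] (b : L) : Prop :=
  IsMax b ∨ ∃ u, b ⋖ u

/-- The partition of `L` into clopen intervals induced by a finite set `P` of
right-isolated points containing the maximum: the interval `[0, min P]` together with
the intervals `]b', b]` for consecutive elements `b' < b` of `P`. -/
def inducedPartition {L : Type*} [LinearOrder L] (P : Finset L) : Set (Set L) :=
  {I | (∃ b ∈ P, (∀ c ∈ P, b ≤ c) ∧ I = Set.Iic b) ∨
    (∃ b ∈ P, ∃ b' ∈ P, b' < b ∧ (∀ c ∈ P, c ≤ b' ∨ b ≤ c) ∧ I = Set.Ioc b' b)}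

section Aux

open MeasureTheory Measure

variable {α : Type*} [MeasurableSpace α]

section Top

variable [TopologicalSpace α]

/-- helper: compact approximation from inside with additive error. -/
lemma aux_exists_compact_lt_add (m : Measure α) [IsFiniteMeasure m] (hm : m.Regular)
    {U : Set α} (hU : IsOpen U) {δ : ℝ≥0∞} (hδ : δ ≠ 0) :
    ∃ K, K ⊆ U ∧ IsCompact K ∧ m U < m K + δ := by
  by_cases h : m U < δ
  · exact ⟨∅, empty_subset _, isCompact_empty, lt_of_lt_of_le h (by simp)⟩
  · push_neg at h
    have hU0 : m U ≠ 0 := fun h0 => hδ (le_antisymm (h0 ▸ h) zero_le)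
    have hlt : m U - δ < m U := ENNReal.sub_lt_self (measure_ne_top m U) hU0 hδ
    obtain ⟨K, hKU, hKc, hK⟩ := hm.innerRegular hU _ hlt
    refine ⟨K, hKU, hKc, ?_⟩
    have hδ' : δ ≠ ∞ := fun h' => (measure_ne_top m U) (top_le_iff.mp (h' ▸ h))
    exact ((ENNReal.sub_lt_iff_lt_right hδ' h).mp hK).trans_le (by rw [add_comm])

lemma aux_regular_add (μ ν : Measure α) [IsFiniteMeasure μ] [IsFiniteMeasure ν]
    (hμ : μ.Regular) (hν : ν.Regular) : (μ + ν).Regular := by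
  haveI : OuterRegular (μ + ν) := by
    constructor
    intro A hA r hr
    rcases eq_top_or_lt_top r with hrtop | hrlt
    · exact ⟨univ, subset_univ A, isOpen_univ, hrtop ▸ measure_lt_top (μ + ν) univ⟩
    · have hfin : (μ + ν) A ≠ ∞ := measure_ne_top _ _
      have hε : r - (μ + ν) A ≠ 0 := by
        simpa [tsub_eq_zero_iff_le] using not_le.mpr hr
      have hε2 : (r - (μ + ν) A) / 2 ≠ 0 := by
        simpa using hε
      obtain ⟨U₁, hAU₁, hU₁o, h₁⟩ := Set.exists_isOpen_lt_add (μ := μ) A (measure_ne_top μ A) hε2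
      obtain ⟨U₂, hAU₂, hU₂o, h₂⟩ := Set.exists_isOpen_lt_add (μ := ν) A (measure_ne_top ν A) hε2
      refine ⟨U₁ ∩ U₂, subset_inter hAU₁ hAU₂, hU₁o.inter hU₂o, ?_⟩
      have hle : (μ + ν) (U₁ ∩ U₂) ≤ μ U₁ + ν U₂ := by
        rw [Measure.add_apply]
        exact add_le_add (measure_mono inter_subset_left) (measure_mono inter_subset_right)
      calc (μ + ν) (U₁ ∩ U₂) ≤ μ U₁ + ν U₂ := hle
        _ < (μ A + (r - (μ + ν) A) / 2) + (ν A + (r - (μ + ν) A) / 2) :=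
            ENNReal.add_lt_add h₁ h₂
        _ = (μ + ν) A + (r - (μ + ν) A) := by
            rw [add_add_add_comm, ENNReal.add_halves, Measure.add_apply]
        _ = r := add_tsub_cancel_of_le hr.le
  refine ⟨?_⟩
  intro U hU r hr
  have hfin : (μ + ν) U ≠ ∞ := measure_ne_top _ _
  have hε : (μ + ν) U - r ≠ 0 := by simpa [tsub_eq_zero_iff_le] using not_le.mpr hr
  have hε2 : ((μ + ν) U - r) / 2 ≠ 0 := by simpa using hε
  obtain ⟨K₁, hK₁U, hK₁c, h₁⟩ := aux_exists_compact_lt_add μ hμ hU hε2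
  obtain ⟨K₂, hK₂U, hK₂c, h₂⟩ := aux_exists_compact_lt_add ν hν hU hε2
  refine ⟨K₁ ∪ K₂, union_subset hK₁U hK₂U, hK₁c.union hK₂c, ?_⟩
  by_contra hcon
  push_neg at hcon
  have hmain : (μ + ν) U < (μ + ν) (K₁ ∪ K₂) + ((μ + ν) U - r) := by
    calc (μ + ν) U = μ U + ν U := Measure.add_apply _ _ _
      _ < (μ K₁ + ((μ + ν) U - r) / 2) + (ν K₂ + ((μ + ν) U - r) / 2) :=
          ENNReal.add_lt_add h₁ h₂
      _ = (μ K₁ + ν K₂) + ((μ + ν) U - r) := by rw [add_add_add_comm, ENNReal.add_halves]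
      _ ≤ (μ + ν) (K₁ ∪ K₂) + ((μ + ν) U - r) := by
          gcongr
          rw [Measure.add_apply]
          exact add_le_add (measure_mono subset_union_left) (measure_mono subset_union_right)
  have : (μ + ν) U < (μ + ν) U :=
    hmain.trans_le (by
      calc (μ + ν) (K₁ ∪ K₂) + ((μ + ν) U - r) ≤ r + ((μ + ν) U - r) := by gcongr
        _ = (μ + ν) U := add_tsub_cancel_of_le hr.le)
  exact lt_irrefl _ this

lemma aux_regular_dirac [T1Space α] [OpensMeasurableSpace α] (a : α) :
    (Measure.dirac a).Regular := by
  haveI : OuterRegular (Measure.dirac a) := by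
    constructor
    intro A hA r hr
    by_cases hmem : a ∈ A
    · refine ⟨univ, subset_univ _, isOpen_univ, ?_⟩
      have h1 : Measure.dirac a A = 1 := by rw [Measure.dirac_apply' a hA]; simp [hmem]
      have h2 : Measure.dirac a univ = 1 := by
        rw [Measure.dirac_apply' a MeasurableSet.univ]; simp
      rw [h2, ← h1]; exact hr
    · refine ⟨{a}ᶜ, subset_compl_singleton_iff.mpr hmem, isClosed_singleton.isOpen_compl, ?_⟩
      have h0 : Measure.dirac a {a}ᶜ = 0 := by
        rw [Measure.dirac_apply' a isClosed_singleton.measurableSet.compl]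
        simp
      rw [h0]
      exact lt_of_le_of_lt zero_le hr
  refine ⟨?_⟩
  intro U hU r hr
  by_cases hmem : a ∈ U
  · refine ⟨{a}, singleton_subset_iff.mpr hmem, isCompact_singleton, lt_of_lt_of_le hr ?_⟩
    have h1 : Measure.dirac a {a} = 1 := by
      rw [Measure.dirac_apply' a isClosed_singleton.measurableSet]; simp
    have h2 : Measure.dirac a U ≤ 1 := by
      rw [show (1 : ℝ≥0∞) = Measure.dirac a univ from by
        rw [Measure.dirac_apply' a MeasurableSet.univ]; simp]
      exact measure_mono (subset_univ _)
    rw [h1]; exact h2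
  · have h0 : Measure.dirac a U = 0 := by
      rw [Measure.dirac_apply' a hU.measurableSet]
      simp [hmem]
    rw [h0] at hr
    exact absurd hr (by simp)

lemma aux_regular_of_le [T2Space α] [OpensMeasurableSpace α] (ν ρ : Measure α)
    [IsFiniteMeasure ν] [IsFiniteMeasure ρ] (hρ : ρ.Regular) (hle : ν ≤ ρ) : ν.Regular := by
  haveI := hρ
  haveI : OuterRegular ν := by
    constructor
    intro A hA r hr
    rcases eq_top_or_lt_top r with hrtop | hrlt
    · exact ⟨univ, subset_univ A, isOpen_univ, hrtop ▸ measure_lt_top ν univ⟩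
    · have hε : r - ν A ≠ 0 := by simpa [tsub_eq_zero_iff_le] using not_le.mpr hr
      obtain ⟨U, hAU, hUo, -, hUd⟩ := hA.exists_isOpen_diff_lt (μ := ρ) (measure_ne_top ρ A) hε
      refine ⟨U, hAU, hUo, ?_⟩
      calc ν U = ν (A ∪ (U \ A)) := by rw [union_diff_cancel hAU]
        _ ≤ ν A + ν (U \ A) := measure_union_le _ _
        _ ≤ ν A + ρ (U \ A) := by gcongr
        _ < ν A + (r - ν A) := by
            exact ENNReal.add_lt_add_left (measure_ne_top ν A) hUd
        _ = r := add_tsub_cancel_of_le hr.le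
  refine ⟨?_⟩
  intro U hU r hr
  have hεne : ν U - r ≠ 0 := by simpa [tsub_eq_zero_iff_le] using not_le.mpr hr
  obtain ⟨K, hKU, hKc, hK⟩ := aux_exists_compact_lt_add ρ hρ hU hεne
  refine ⟨K, hKU, hKc, ?_⟩
  by_contra hcon
  push_neg at hcon
  have hρd : ρ (U \ K) < ν U - r := by
    rw [measure_diff hKU hKc.isClosed.measurableSet.nullMeasurableSet (measure_ne_top ρ K)]
    have hKle : ρ K ≤ ρ U := measure_mono hKU
    rw [ENNReal.sub_lt_iff_lt_right (measure_ne_top ρ K) hKle]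
    exact hK.trans_le (by rw [add_comm])
  have : ν U < ν U := by
    calc ν U = ν (K ∪ (U \ K)) := by rw [union_diff_cancel hKU]
      _ ≤ ν K + ν (U \ K) := measure_union_le _ _
      _ ≤ ν K + ρ (U \ K) := by gcongr
      _ < ν K + (ν U - r) := ENNReal.add_lt_add_left (measure_ne_top ν K) hρd
      _ ≤ r + (ν U - r) := by gcongr
      _ = ν U := add_tsub_cancel_of_le hr.le
  exact lt_irrefl _ this

end Top

lemma aux_tv_sub_le (ν₁ ν₂ : Measure α) [IsFiniteMeasure ν₁] [IsFiniteMeasure ν₂] :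
    (ν₁.toSignedMeasure - ν₂.toSignedMeasure).totalVariation ≤ ν₁ + ν₂ := by
  set s := ν₁.toSignedMeasure - ν₂.toSignedMeasure with hs
  obtain ⟨i, hi₁, hi₂, hi₃, hpos, hneg⟩ := s.toJordanDecomposition_spec
  rw [Measure.le_iff]
  intro A hA
  rw [SignedMeasure.totalVariation, Measure.add_apply, hpos, hneg,
    SignedMeasure.toMeasureOfZeroLE_apply _ hi₂ hi₁ hA,
    SignedMeasure.toMeasureOfLEZero_apply _ hi₃ hi₁.compl hA, Measure.add_apply]
  have h₁ : s (i ∩ A) ≤ (ν₁ A).toReal := by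
    rw [hs, Measure.toSignedMeasure_sub_apply (hi₁.inter hA), measureReal_def, measureReal_def]
    have h1 : (ν₁ (i ∩ A)).toReal ≤ (ν₁ A).toReal :=
      ENNReal.toReal_mono (measure_ne_top ν₁ A) (measure_mono inter_subset_right)
    have h2 : 0 ≤ (ν₂ (i ∩ A)).toReal := ENNReal.toReal_nonneg
    linarith
  have h₂ : -s (iᶜ ∩ A) ≤ (ν₂ A).toReal := by
    rw [hs, Measure.toSignedMeasure_sub_apply (hi₁.compl.inter hA), measureReal_def,
      measureReal_def]
    have h1 : (ν₂ (iᶜ ∩ A)).toReal ≤ (ν₂ A).toReal :=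
      ENNReal.toReal_mono (measure_ne_top ν₂ A) (measure_mono inter_subset_right)
    have h2 : 0 ≤ (ν₁ (iᶜ ∩ A)).toReal := ENNReal.toReal_nonneg
    linarith
  have coee : ∀ (x : ℝ) (hx : 0 ≤ x) (m : ℝ≥0∞), x ≤ m.toReal →
      (((↑) : ℝ≥0 → ℝ≥0∞) ⟨x, hx⟩) ≤ m := by
    intro x hx m hxm
    have hcoe : (((↑) : ℝ≥0 → ℝ≥0∞) ⟨x, hx⟩) = ENNReal.ofReal x := by
      rw [ENNReal.ofReal]
      congr 1
      exact NNReal.coe_injective (by simp [Real.coe_toNNReal', max_eq_left hx]; rfl)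
    rw [hcoe]
    exact ENNReal.ofReal_le_of_le_toReal hxm
  exact add_le_add (coee _ _ _ h₁) (coee _ _ _ h₂)

end Aux

theorem stmt5 {L : Type*} [LinearOrder L] [TopologicalSpace L] [OrderTopology L]
    [CompactSpace L] [Nonempty L] [MeasurableSpace L] [BorelSpace L]
    (P : Finset L) (hPne : ∃ m ∈ P, IsMax m)
    (hPiso : ∀ b ∈ P, RightIsolated b)
    (μ : SignedMeasure L) (hreg : μ.totalVariation.Regular) :
    ∃ μt : SignedMeasure L, μt.totalVariation.Regular ∧
      (∀ I ∈ inducedPartition P, μt I = 0) ∧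
      (∀ t : L, t ∉ P → μt (Set.Iic t) = μ (Set.Iic t)) ∧
      (μt.totalVariation Set.univ).toReal ≤
        (μ.totalVariation Set.univ).toReal + 2 * ∑ b ∈ P, |μ (Set.Iic b)| := by
  classical
  haveI : MeasurableSingletonClass L := ⟨fun a => isClosed_singleton.measurableSet⟩
  set p := μ.toJordanDecomposition.posPart with hp
  set n := μ.toJordanDecomposition.negPart with hn
  set c : L → ℝ := fun b => μ (Set.Iic b) with hc
  set sf : L → L := fun b => if h : ∃ u, b ⋖ u then h.choose else b with hsfdef
  have hcov : ∀ b ∈ P, ¬IsMax b → b ⋖ sf b := by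
    intro b hb hmax
    rcases hPiso b hb with h | h
    · exact absurd h hmax
    · simp only [hsfdef, dif_pos h]
      exact h.choose_spec
  set d : L → Measure L := fun b => if IsMax b then 0 else Measure.dirac (sf b) with hd
  have hdfin : ∀ b (A : Set L), d b A ≠ ∞ := by
    intro b A
    by_cases h : IsMax b
    · simp [hd, h]
    · simp only [hd, if_neg h]
      exact measure_ne_top _ _
  have hdreal : ∀ b (A : Set L),
      (d b A).toReal = if IsMax b then 0 else (if sf b ∈ A then 1 else 0) := by
    intro b A
    by_cases h : IsMax b
    · simp [hd, h]
    · simp only [hd, if_neg h]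
      rw [Measure.dirac_apply]
      by_cases h2 : sf b ∈ A <;> simp [h2]
  have hdiracreal : ∀ (a : L) (A : Set L),
      ((Measure.dirac a : Measure L) A).toReal = if a ∈ A then 1 else 0 := by
    intro a A
    rw [Measure.dirac_apply]
    by_cases h2 : a ∈ A <;> simp [h2]
  set X : L → Measure L :=
    fun b => ENNReal.ofReal (c b) • d b + ENNReal.ofReal (-c b) • Measure.dirac b with hX
  set Y : L → Measure L :=
    fun b => ENNReal.ofReal (c b) • Measure.dirac b + ENNReal.ofReal (-c b) • d b with hY
  have hXfin : ∀ b (A : Set L), X b A ≠ ∞ := by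
    intro b A
    simp only [hX, Measure.add_apply, Measure.smul_apply, smul_eq_mul]
    exact ENNReal.add_ne_top.mpr ⟨ENNReal.mul_ne_top ENNReal.ofReal_ne_top (hdfin b A),
      ENNReal.mul_ne_top ENNReal.ofReal_ne_top (measure_ne_top _ _)⟩
  have hYfin : ∀ b (A : Set L), Y b A ≠ ∞ := by
    intro b A
    simp only [hY, Measure.add_apply, Measure.smul_apply, smul_eq_mul]
    exact ENNReal.add_ne_top.mpr ⟨ENNReal.mul_ne_top ENNReal.ofReal_ne_top (measure_ne_top _ _),
      ENNReal.mul_ne_top ENNReal.ofReal_ne_top (hdfin b A)⟩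
  set pos := p + ∑ b ∈ P, X b with hposdef
  set neg := n + ∑ b ∈ P, Y b with hnegdef
  have hposA : ∀ A : Set L, pos A = p A + ∑ b ∈ P, X b A := by
    intro A
    simp [hposdef, Measure.add_apply, Measure.finset_sum_apply]
  have hnegA : ∀ A : Set L, neg A = n A + ∑ b ∈ P, Y b A := by
    intro A
    simp [hnegdef, Measure.add_apply, Measure.finset_sum_apply]
  have hXsumne : ∀ A : Set L, (∑ b ∈ P, X b A) ≠ ∞ :=
    fun A => (ENNReal.sum_lt_top.mpr (fun b _ => (hXfin b A).lt_top)).ne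
  have hYsumne : ∀ A : Set L, (∑ b ∈ P, Y b A) ≠ ∞ :=
    fun A => (ENNReal.sum_lt_top.mpr (fun b _ => (hYfin b A).lt_top)).ne
  have hposfin : ∀ A : Set L, pos A ≠ ∞ := by
    intro A
    rw [hposA]
    exact ENNReal.add_ne_top.mpr ⟨measure_ne_top _ _, hXsumne A⟩
  have hnegfin : ∀ A : Set L, neg A ≠ ∞ := by
    intro A
    rw [hnegA]
    exact ENNReal.add_ne_top.mpr ⟨measure_ne_top _ _, hYsumne A⟩
  haveI : IsFiniteMeasure pos := ⟨(hposfin univ).lt_top⟩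
  haveI : IsFiniteMeasure neg := ⟨(hnegfin univ).lt_top⟩
  have hμdecomp : μ = p.toSignedMeasure - n.toSignedMeasure :=
    (μ.toSignedMeasure_toJordanDecomposition).symm
  have hμapp : ∀ A : Set L, MeasurableSet A → μ A = (p A).toReal - (n A).toReal := by
    intro A hA
    conv_lhs => rw [hμdecomp]
    rw [Measure.toSignedMeasure_sub_apply hA, measureReal_def, measureReal_def]
  set μt := pos.toSignedMeasure - neg.toSignedMeasure with hμt
  have hmax' : ∀ r : ℝ, max r 0 - max (-r) 0 = r := by
    intro r
    rcases le_total 0 r with h | h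
    · rw [max_eq_left h, max_eq_right (by linarith)]; ring
    · rw [max_eq_right h, max_eq_left (by linarith)]; ring
  have key : ∀ A : Set L, MeasurableSet A →
      μt A = μ A + ∑ b ∈ P, c b * ((d b A).toReal - ((Measure.dirac b : Measure L) A).toReal) := by
    intro A hA
    rw [hμt, Measure.toSignedMeasure_sub_apply hA, measureReal_def, measureReal_def, hposA, hnegA,
      ENNReal.toReal_add (measure_ne_top p A) (hXsumne A),
      ENNReal.toReal_add (measure_ne_top n A) (hYsumne A),
      ENNReal.toReal_sum (fun b _ => hXfin b A), ENNReal.toReal_sum (fun b _ => hYfin b A)]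
    have hterm : ∀ b ∈ P, (X b A).toReal - (Y b A).toReal
        = c b * ((d b A).toReal - ((Measure.dirac b : Measure L) A).toReal) := by
      intro b _
      simp only [hX, hY, Measure.add_apply, Measure.smul_apply, smul_eq_mul]
      rw [ENNReal.toReal_add (ENNReal.mul_ne_top ENNReal.ofReal_ne_top (hdfin b A))
          (ENNReal.mul_ne_top ENNReal.ofReal_ne_top (measure_ne_top _ _)),
        ENNReal.toReal_add (ENNReal.mul_ne_top ENNReal.ofReal_ne_top (measure_ne_top _ _))
          (ENNReal.mul_ne_top ENNReal.ofReal_ne_top (hdfin b A)),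
        ENNReal.toReal_mul, ENNReal.toReal_mul, ENNReal.toReal_mul, ENNReal.toReal_mul,
        ENNReal.toReal_ofReal', ENNReal.toReal_ofReal']
      calc max (c b) 0 * (d b A).toReal + max (-c b) 0 * ((Measure.dirac b : Measure L) A).toReal
            - (max (c b) 0 * ((Measure.dirac b : Measure L) A).toReal
              + max (-c b) 0 * (d b A).toReal)
          = (max (c b) 0 - max (-c b) 0)
              * ((d b A).toReal - ((Measure.dirac b : Measure L) A).toReal) := by ring
        _ = c b * ((d b A).toReal - ((Measure.dirac b : Measure L) A).toReal) := by
            rw [hmax']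
    have hsum : (∑ b ∈ P, (X b A).toReal) - (∑ b ∈ P, (Y b A).toReal)
        = ∑ b ∈ P, c b * ((d b A).toReal - ((Measure.dirac b : Measure L) A).toReal) := by
      rw [← Finset.sum_sub_distrib]
      exact Finset.sum_congr rfl hterm
    rw [hμapp A hA]
    linarith [hsum]
  -- property (ii)
  have prop2 : ∀ t : L, t ∉ P → μt (Set.Iic t) = μ (Set.Iic t) := by
    intro t ht
    rw [key _ measurableSet_Iic]
    have hz : ∑ b ∈ P, c b * ((d b (Set.Iic t)).toReal
        - ((Measure.dirac b : Measure L) (Set.Iic t)).toReal) = 0 := by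
      apply Finset.sum_eq_zero
      intro b hb
      rw [hdreal, hdiracreal]
      by_cases hmaxb : IsMax b
      · have hbt : b ∉ Set.Iic t := by
          intro hmem
          rw [Set.mem_Iic] at hmem
          have : t = b := le_antisymm (hmaxb hmem) hmem
          exact ht (this ▸ hb)
        simp [hmaxb, hbt]
      · have hcb := hcov b hb hmaxb
        by_cases hbt : b ≤ t
        · have hblt : b < t := lt_of_le_of_ne hbt (fun h => ht (h ▸ hb))
          have hsft : sf b ≤ t := not_lt.mp (hcb.2 hblt)
          simp [hmaxb, Set.mem_Iic, hbt, hsft]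
        · have hsft : ¬ sf b ≤ t := fun h => hbt (le_trans hcb.1.le h)
          simp [hmaxb, Set.mem_Iic, hbt, hsft]
    rw [hz, add_zero]
  -- property (i)
  have prop1 : ∀ I ∈ inducedPartition P, μt I = 0 := by
    rintro I (⟨b₀, hb₀P, hmin, rfl⟩ | ⟨b, hbP, b', hb'P, hlt, hadj, rfl⟩)
    · rw [key _ measurableSet_Iic]
      have hsum : ∑ bb ∈ P, c bb * ((d bb (Set.Iic b₀)).toReal
          - ((Measure.dirac bb : Measure L) (Set.Iic b₀)).toReal) = - c b₀ := by
        rw [Finset.sum_eq_single_of_mem b₀ hb₀P ?side]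
        case side =>
          intro bb hbb hne
          have hb₀le : b₀ ≤ bb := hmin bb hbb
          have h2 : bb ∉ Set.Iic b₀ := by
            rw [Set.mem_Iic]
            exact fun h => hne (le_antisymm h hb₀le)
          rw [hdreal, hdiracreal]
          by_cases hmaxb : IsMax bb
          · simp [hmaxb, h2]
          · have h3 : sf bb ∉ Set.Iic b₀ := by
              rw [Set.mem_Iic]
              exact not_le.mpr (lt_of_le_of_lt hb₀le (hcov bb hbb hmaxb).lt)
            simp [hmaxb, h2, h3]
        · rw [hdreal, hdiracreal]
          have h1 : b₀ ∈ Set.Iic b₀ := Set.mem_Iic.mpr le_rfl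
          by_cases hmaxb : IsMax b₀
          · simp only [if_pos hmaxb, if_pos h1]
            ring
          · have h3 : sf b₀ ∉ Set.Iic b₀ := by
              rw [Set.mem_Iic]
              exact not_le.mpr (hcov b₀ hb₀P hmaxb).lt
            simp only [if_neg hmaxb, if_pos h1, if_neg h3]
            ring
      rw [hsum]
      have e1 : c b₀ = μ (Set.Iic b₀) := rfl
      linarith
    · rw [key _ measurableSet_Ioc]
      have hne : b' ≠ b := ne_of_lt hlt
      have hnmax' : ¬ IsMax b' := fun h => absurd (h hlt.le) (not_le.mpr hlt)
      have hcb' := hcov b' hb'P hnmax'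
      have hsum : ∑ bb ∈ P, c bb * ((d bb (Set.Ioc b' b)).toReal
          - ((Measure.dirac bb : Measure L) (Set.Ioc b' b)).toReal) = c b' - c b := by
        rw [← Finset.add_sum_erase _ _ hbP,
          Finset.sum_eq_single_of_mem b' (Finset.mem_erase.mpr ⟨hne, hb'P⟩) ?rest]
        case rest =>
          intro bb hbb hnb'
          have hbbP : bb ∈ P := Finset.mem_of_mem_erase hbb
          have hbbne : bb ≠ b := Finset.ne_of_mem_erase hbb
          rcases hadj bb hbbP with hle | hge
          · have hbb' : bb < b' := lt_of_le_of_ne hle hnb'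
            have hnm : bb ∉ Set.Ioc b' b := by
              rintro ⟨h, -⟩
              exact absurd h (not_lt.mpr hle)
            rw [hdreal, hdiracreal]
            by_cases hmaxb : IsMax bb
            · simp [hmaxb, hnm]
            · have h4 : sf bb ∉ Set.Ioc b' b := by
                rintro ⟨hgt, -⟩
                exact (hcov bb hbbP hmaxb).2 hbb' hgt
              simp [hmaxb, hnm, h4]
          · have hblt : b < bb := lt_of_le_of_ne hge (Ne.symm hbbne)
            have hnm : bb ∉ Set.Ioc b' b := by
              rintro ⟨-, h⟩
              exact absurd h (not_le.mpr hblt)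
            rw [hdreal, hdiracreal]
            by_cases hmaxb : IsMax bb
            · simp [hmaxb, hnm]
            · have h4 : sf bb ∉ Set.Ioc b' b := by
                rintro ⟨-, h⟩
                have : b < b := lt_of_lt_of_le (hblt.trans (hcov bb hbbP hmaxb).lt) h
                exact lt_irrefl _ this
              simp [hmaxb, hnm, h4]
        · -- f b + f b' = c b' - c b
          have hbmem : b ∈ Set.Ioc b' b := Set.mem_Ioc.mpr ⟨hlt, le_rfl⟩
          have h2 : b' ∉ Set.Ioc b' b := by
            rintro ⟨h, -⟩
            exact lt_irrefl _ h
          have h3 : sf b' ∈ Set.Ioc b' b :=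
            Set.mem_Ioc.mpr ⟨hcb'.lt, not_lt.mp (hcb'.2 hlt)⟩
          rw [hdreal, hdreal, hdiracreal, hdiracreal]
          by_cases hmaxb : IsMax b
          · simp only [if_pos hmaxb, if_neg hnmax', if_pos hbmem, if_neg h2, if_pos h3]
            ring
          · have h1 : sf b ∉ Set.Ioc b' b := by
              rintro ⟨-, hle2⟩
              exact absurd hle2 (not_le.mpr (hcov b hbP hmaxb).lt)
            simp only [if_neg hmaxb, if_neg hnmax', if_pos hbmem, if_neg h2, if_pos h3,
              if_neg h1]
            ring
      have hioc : μ (Set.Iic b) = μ (Set.Iic b') + μ (Set.Ioc b' b) := by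
        rw [← Set.Iic_union_Ioc_eq_Iic hlt.le]
        exact VectorMeasure.of_union (Set.Iic_disjoint_Ioc le_rfl)
          measurableSet_Iic measurableSet_Ioc
      rw [hsum]
      have e1 : c b' = μ (Set.Iic b') := rfl
      have e2 : c b = μ (Set.Iic b) := rfl
      linarith
  -- total variation domination
  have htv : μt.totalVariation ≤ pos + neg := by
    rw [hμt]
    exact aux_tv_sub_le pos neg
  -- property (iii)
  have hbound : (μt.totalVariation univ).toReal
      ≤ (μ.totalVariation univ).toReal + 2 * ∑ b ∈ P, |c b| := by
    have h1 : (μt.totalVariation univ).toReal ≤ ((pos + neg) univ).toReal := by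
      apply ENNReal.toReal_mono
      · rw [Measure.add_apply]
        exact ENNReal.add_ne_top.mpr ⟨hposfin univ, hnegfin univ⟩
      · exact Measure.le_iff'.mp htv univ
    refine h1.trans ?_
    rw [Measure.add_apply, ENNReal.toReal_add (hposfin univ) (hnegfin univ), hposA, hnegA,
      ENNReal.toReal_add (measure_ne_top p univ) (hXsumne univ),
      ENNReal.toReal_add (measure_ne_top n univ) (hYsumne univ),
      ENNReal.toReal_sum (fun b _ => hXfin b univ), ENNReal.toReal_sum (fun b _ => hYfin b univ)]
    have htveq : (μ.totalVariation univ).toReal = (p univ).toReal + (n univ).toReal := by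
      rw [show μ.totalVariation = p + n from rfl, Measure.add_apply,
        ENNReal.toReal_add (measure_ne_top p univ) (measure_ne_top n univ)]
    have hperb : ∀ b ∈ P, (X b univ).toReal + (Y b univ).toReal ≤ 2 * |c b| := by
      intro b _
      simp only [hX, hY, Measure.add_apply, Measure.smul_apply, smul_eq_mul]
      rw [ENNReal.toReal_add (ENNReal.mul_ne_top ENNReal.ofReal_ne_top (hdfin b univ))
          (ENNReal.mul_ne_top ENNReal.ofReal_ne_top (measure_ne_top _ _)),
        ENNReal.toReal_add (ENNReal.mul_ne_top ENNReal.ofReal_ne_top (measure_ne_top _ _))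
          (ENNReal.mul_ne_top ENNReal.ofReal_ne_top (hdfin b univ)),
        ENNReal.toReal_mul, ENNReal.toReal_mul, ENNReal.toReal_mul, ENNReal.toReal_mul,
        ENNReal.toReal_ofReal', ENNReal.toReal_ofReal']
      have he0 : 0 ≤ (d b univ).toReal := ENNReal.toReal_nonneg
      have he1 : (d b univ).toReal ≤ 1 := by
        rw [hdreal]
        split_ifs <;> norm_num
      have hδ : ((Measure.dirac b : Measure L) univ).toReal = 1 := by
        rw [hdiracreal]
        simp
      rw [hδ]
      have habs : |c b| = max (c b) 0 + max (-c b) 0 := by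
        rcases le_total 0 (c b) with h | h
        · rw [abs_of_nonneg h, max_eq_left h, max_eq_right (by linarith)]; ring
        · rw [abs_of_nonpos h, max_eq_right h, max_eq_left (by linarith)]; ring
      rw [habs]
      have m1 : (0:ℝ) ≤ max (c b) 0 := le_max_right _ _
      have m2 : (0:ℝ) ≤ max (-c b) 0 := le_max_right _ _
      nlinarith
    have hsumle : (∑ b ∈ P, (X b univ).toReal) + (∑ b ∈ P, (Y b univ).toReal)
        ≤ 2 * ∑ b ∈ P, |c b| := by
      rw [← Finset.sum_add_distrib, Finset.mul_sum]
      exact Finset.sum_le_sum hperb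
    rw [htveq] at *
    linarith
  -- regularity
  have hW : ∀ b : L, (ENNReal.ofReal (c b) + ENNReal.ofReal (-c b)) ≠ ∞ :=
    fun b => ENNReal.add_ne_top.mpr ⟨ENNReal.ofReal_ne_top, ENNReal.ofReal_ne_top⟩
  have hdreg : ∀ b : L, (d b).Regular ∧ IsFiniteMeasure (d b) := by
    intro b
    by_cases h : IsMax b
    · simp only [hd, if_pos h]
      exact ⟨inferInstance, inferInstance⟩
    · simp only [hd, if_neg h]
      exact ⟨aux_regular_dirac _, inferInstance⟩
  have hsum_reg : (∑ b ∈ P, (ENNReal.ofReal (c b) + ENNReal.ofReal (-c b))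
        • (d b + Measure.dirac b)).Regular
      ∧ IsFiniteMeasure (∑ b ∈ P, (ENNReal.ofReal (c b) + ENNReal.ofReal (-c b))
        • (d b + Measure.dirac b)) := by
    have hone : ∀ b : L, ((ENNReal.ofReal (c b) + ENNReal.ofReal (-c b))
        • (d b + Measure.dirac b)).Regular ∧ IsFiniteMeasure ((ENNReal.ofReal (c b)
        + ENNReal.ofReal (-c b)) • (d b + Measure.dirac b)) := by
      intro b
      obtain ⟨hr, hf⟩ := hdreg b
      haveI := hf
      haveI : (d b + Measure.dirac b).Regular := aux_regular_add _ _ hr (aux_regular_dirac _)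
      haveI : IsFiniteMeasure (d b + Measure.dirac b) := inferInstance
      refine ⟨Measure.Regular.smul (hW b), ⟨?_⟩⟩
      rw [Measure.smul_apply, smul_eq_mul]
      exact ENNReal.mul_lt_top (hW b).lt_top (measure_lt_top _ _)
    have hgen : ∀ S : Finset L, (∑ b ∈ S, (ENNReal.ofReal (c b) + ENNReal.ofReal (-c b))
        • (d b + Measure.dirac b)).Regular
        ∧ IsFiniteMeasure (∑ b ∈ S, (ENNReal.ofReal (c b) + ENNReal.ofReal (-c b))
        • (d b + Measure.dirac b)) := by
      intro S
      induction S using Finset.cons_induction with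
      | empty =>
        rw [Finset.sum_empty]
        exact ⟨inferInstance, inferInstance⟩
      | cons a S ha ih =>
        rw [Finset.sum_cons]
        obtain ⟨h1, h1f⟩ := hone a
        obtain ⟨h2, h2f⟩ := ih
        haveI := h1f; haveI := h2f
        exact ⟨aux_regular_add _ _ h1 h2, inferInstance⟩
    exact hgen P
  have hposneg : pos + neg = μ.totalVariation
      + ∑ b ∈ P, (ENNReal.ofReal (c b) + ENNReal.ofReal (-c b)) • (d b + Measure.dirac b) := by
    ext A hA
    rw [Measure.add_apply, hposA, hnegA, Measure.add_apply, Measure.finset_sum_apply,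
      show μ.totalVariation = p + n from rfl, Measure.add_apply]
    have hterm : ∀ b ∈ P, X b A + Y b A
        = ((ENNReal.ofReal (c b) + ENNReal.ofReal (-c b)) • (d b + Measure.dirac b)) A := by
      intro b _
      simp only [hX, hY, Measure.add_apply, Measure.smul_apply, smul_eq_mul]
      ring
    calc p A + ∑ b ∈ P, X b A + (n A + ∑ b ∈ P, Y b A)
        = p A + n A + ∑ b ∈ P, (X b A + Y b A) := by
          rw [Finset.sum_add_distrib]; ring
      _ = p A + n A + ∑ b ∈ P, ((ENNReal.ofReal (c b) + ENNReal.ofReal (-c b))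
            • (d b + Measure.dirac b)) A := by
          rw [Finset.sum_congr rfl hterm]
  have hregpn : (pos + neg).Regular := by
    rw [hposneg]
    haveI : IsFiniteMeasure μ.totalVariation :=
      show IsFiniteMeasure (μ.toJordanDecomposition.posPart
        + μ.toJordanDecomposition.negPart) from inferInstance
    haveI := hsum_reg.2
    exact aux_regular_add _ _ hreg hsum_reg.1
  haveI : IsFiniteMeasure (pos + neg) := inferInstance
  haveI : IsFiniteMeasure μt.totalVariation :=
    show IsFiniteMeasure (μt.toJordanDecomposition.posPart
      + μt.toJordanDecomposition.negPart) from inferInstance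
  have hμtreg : μt.totalVariation.Regular := aux_regular_of_le _ _ hregpn htv
  exact ⟨μt, hμtreg, prop1, prop2, hbound⟩
end

section
/- Let K be a compact line with minimum 0. For each measure μ ∈ M(K), the function F_μ(t) = μ([0,t]) is right-continuous and satisfies |F_μ(0)| + V(F_μ) ≤ ‖μ‖, where V denotes total variation and ‖μ‖ the total variation norm of μ. -/
open MeasureTheory Set

/-- The total variation of `F : K → ℝ`. -/
noncomputable def variation {K : Type*} [LinearOrder K] (F : K → ℝ) : ℝ :=
  sSup {v | ∃ (n : ℕ) (t : Fin (n + 1) → K), StrictMono t ∧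
    v = ∑ i : Fin n, |F (t i.succ) - F (t i.castSucc)|}

lemma abs_apply_le_tv {α : Type*} [MeasurableSpace α] (μ : SignedMeasure α) {A : Set α}
    (hA : MeasurableSet A) : |μ A| ≤ (μ.totalVariation A).toReal := by
  conv_lhs => rw [← μ.toSignedMeasure_toJordanDecomposition]
  rw [JordanDecomposition.toSignedMeasure, Measure.toSignedMeasure_sub_apply hA,
    SignedMeasure.totalVariation,
    Measure.add_apply, ENNReal.toReal_add (measure_ne_top _ _) (measure_ne_top _ _)]
  have h1 : (0:ℝ) ≤ (μ.toJordanDecomposition.posPart A).toReal := ENNReal.toReal_nonneg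
  have h2 : (0:ℝ) ≤ (μ.toJordanDecomposition.negPart A).toReal := ENNReal.toReal_nonneg
  rw [abs_le, measureReal_def, measureReal_def]; constructor <;> linarith

lemma iic_sub_iic {K : Type*} [LinearOrder K] [TopologicalSpace K] [OrderTopology K]
    [MeasurableSpace K] [BorelSpace K] (μ : SignedMeasure K) {a b : K} (hab : a ≤ b) :
    μ (Set.Iic b) - μ (Set.Iic a) = μ (Set.Ioc a b) := by
  have h : Set.Iic a ∪ Set.Ioc a b = Set.Iic b := Set.Iic_union_Ioc_eq_Iic hab
  have h2 := μ.of_union (A := Set.Iic a) (B := Set.Ioc a b) (Set.Iic_disjoint_Ioc le_rfl)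
    measurableSet_Iic measurableSet_Ioc
  rw [h] at h2
  rw [h2]; ring

theorem stmt7 {K : Type*} [LinearOrder K] [TopologicalSpace K] [OrderTopology K]
    [CompactSpace K] [Nonempty K] [MeasurableSpace K] [BorelSpace K]
    (z : K) (hz : ∀ t, z ≤ t)
    (μ : SignedMeasure K) (hreg : μ.totalVariation.Regular) :
    (∀ t : K, ContinuousWithinAt (fun s => μ (Set.Iic s)) (Set.Ici t) t) ∧
    |μ (Set.Iic z)| + variation (fun t => μ (Set.Iic t))
      ≤ (μ.totalVariation Set.univ).toReal := by
  set ν := μ.totalVariation with hν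
  have hνfin : ∀ A : Set K, ν A ≠ ⊤ := fun A => measure_ne_top _ _
  constructor
  · intro t
    rw [ContinuousWithinAt, Metric.tendsto_nhds]
    intro ε hε
    haveI : ν.OuterRegular := hreg.toOuterRegular
    obtain ⟨U, hUsub, hUopen, hU⟩ := Set.exists_isOpen_lt_of_lt (μ := ν) (Set.Iic t)
      (ν (Set.Iic t) + ENNReal.ofReal ε)
      (ENNReal.lt_add_right (hνfin _) (by simpa using hε))
    -- ν (U \ Iic t) < ofReal ε
    have hdiff : ν (U \ Set.Iic t) < ENNReal.ofReal ε := by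
      have h1 : ν (Set.Iic t) + ν (U \ Set.Iic t) = ν U := by
        rw [measure_add_diff measurableSet_Iic.nullMeasurableSet U,
          Set.union_eq_self_of_subset_left hUsub]
      have := h1.trans_lt hU
      exact (ENNReal.add_lt_add_iff_left (hνfin _)).mp this
    -- find a right neighborhood S of t with Iic u ⊆ U for u ∈ S
    have key : ∃ S ∈ nhdsWithin t (Set.Ici t), ∀ u ∈ S, t ≤ u ∧ Set.Iic u ⊆ U := by
      by_cases hC : Uᶜ = ∅
      · refine ⟨Set.Ici t, self_mem_nhdsWithin, fun u hu => ⟨hu, fun w _ => ?_⟩⟩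
        by_contra hw
        exact absurd (Set.eq_empty_iff_forall_notMem.mp hC w) (fun h => h hw)
      · have hclosed : IsClosed Uᶜ := hUopen.isClosed_compl
        obtain ⟨c, hcC, hcmin⟩ := hclosed.isCompact.exists_isLeast
          (Set.nonempty_iff_ne_empty.mpr hC)
        have htU : t ∈ U := hUsub le_rfl
        have htc : t < c := by
          rcases lt_or_ge t c with h | h
          · exact h
          · exact absurd (hUsub h) hcC
        refine ⟨Set.Ico t c, ?_, ?_⟩
        · exact mem_nhdsWithin.mpr ⟨Set.Iio c, isOpen_Iio, htc,
            fun x hx => ⟨hx.2, hx.1⟩⟩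
        · intro u hu
          refine ⟨hu.1, fun w hw => ?_⟩
          by_contra hwU
          exact absurd (hcmin hwU) (not_le.mpr (lt_of_le_of_lt hw hu.2))
    obtain ⟨S, hS, hSprop⟩ := key
    filter_upwards [hS] with u hu
    obtain ⟨htu, hIic⟩ := hSprop u hu
    rw [Real.dist_eq, iic_sub_iic μ htu]
    have hsub : Set.Ioc t u ⊆ U \ Set.Iic t := fun x hx =>
      ⟨hIic hx.2, not_le.mpr hx.1⟩
    calc |μ (Set.Ioc t u)| ≤ (ν (Set.Ioc t u)).toReal := abs_apply_le_tv μ measurableSet_Ioc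
      _ < ε := ENNReal.toReal_lt_of_lt_ofReal ((measure_mono hsub).trans_lt hdiff)
  · have hz0 : |μ (Set.Iic z)| ≤ (ν (Set.Iic z)).toReal := abs_apply_le_tv μ measurableSet_Iic
    have hzuniv : (ν (Set.Iic z)).toReal ≤ (ν Set.univ).toReal :=
      ENNReal.toReal_mono (hνfin _) (measure_mono (Set.subset_univ _))
    have hmain : variation (fun t => μ (Set.Iic t)) ≤ (ν Set.univ).toReal - |μ (Set.Iic z)| := by
      apply Real.sSup_le
      · rintro v ⟨n, t, hmono, rfl⟩
        have hterm : ∀ i : Fin n,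
            |μ (Set.Iic (t i.succ)) - μ (Set.Iic (t i.castSucc))|
            = |μ (Set.Ioc (t i.castSucc) (t i.succ))| := fun i => by
          rw [iic_sub_iic μ (hmono (Fin.castSucc_lt_succ (i := i))).le]
        have hdisj : Pairwise (Function.onFun Disjoint fun i : Fin n =>
            Set.Ioc (t i.castSucc) (t i.succ)) := by
          intro i j hij
          rcases hij.lt_or_gt with h | h
          · exact Set.Ioc_disjoint_Ioc.mpr ((min_le_left _ _).trans (le_max_of_le_right
              (hmono.monotone (show i.succ ≤ j.castSucc by
                simp only [Fin.le_def, Fin.val_succ, Fin.coe_castSucc]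
                exact h))))
          · exact Set.Ioc_disjoint_Ioc.mpr ((min_le_right _ _).trans (le_max_of_le_left
              (hmono.monotone (show j.succ ≤ i.castSucc by
                simp only [Fin.le_def, Fin.val_succ, Fin.coe_castSucc]
                exact h))))
        have hmeas : ∀ i : Fin n, MeasurableSet (Set.Ioc (t i.castSucc) (t i.succ)) :=
          fun i => measurableSet_Ioc
        have hsum : ∑ i : Fin n, ν (Set.Ioc (t i.castSucc) (t i.succ))
            = ν (⋃ i : Fin n, Set.Ioc (t i.castSucc) (t i.succ)) := by
          rw [measure_iUnion hdisj hmeas, tsum_fintype]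
        have hUdisj : Disjoint (Set.Iic z) (⋃ i : Fin n, Set.Ioc (t i.castSucc) (t i.succ)) := by
          rw [Set.disjoint_left]
          intro x hx hx'
          obtain ⟨i, hi⟩ := Set.mem_iUnion.mp hx'
          exact absurd ((hz _).trans_lt hi.1) (not_lt.mpr hx)
        have htot : ν (Set.Iic z) + ν (⋃ i : Fin n, Set.Ioc (t i.castSucc) (t i.succ)) ≤ ν Set.univ := by
          rw [← measure_union hUdisj (MeasurableSet.iUnion hmeas)]
          exact measure_mono (Set.subset_univ _)
        have hsumle : ∑ i : Fin n, |μ (Set.Ioc (t i.castSucc) (t i.succ))|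
            ≤ (ν (⋃ i : Fin n, Set.Ioc (t i.castSucc) (t i.succ))).toReal := by
          rw [← hsum, ENNReal.toReal_sum (fun i _ => hνfin _)]
          exact Finset.sum_le_sum fun i _ => abs_apply_le_tv μ (hmeas i)
        have hreal : (ν (Set.Iic z)).toReal
            + (ν (⋃ i : Fin n, Set.Ioc (t i.castSucc) (t i.succ))).toReal ≤ (ν Set.univ).toReal := by
          rw [← ENNReal.toReal_add (hνfin _) (hνfin _)]
          exact ENNReal.toReal_mono (hνfin _) htot
        simp only [hterm]
        linarith
      · linarith
    linarith
end

section
/- Let K be a zero-dimensional compact line, L a compact line, q : K → L a continuous increasing surjection, and Q = {t ∈ L : |q⁻¹(t)| > 1}. Let (μ_n) be a weak*-null sequence in M(L). If there exists a bounded operator T' : C(K) → c₀ with T' ∘ q* = T, where T : C(L) → c₀ is the operator associated with (μ_n), then there exists a countable subset E of Q such that μ_n([0,t]) → 0 for all t ∈ Q \ E. -/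
open MeasureTheory Set Filter Topology ZeroAtInfty

lemma jump_lemma {K : Type*} [LinearOrder K] [TopologicalSpace K] [OrderTopology K]
    [CompactSpace K]
    (hKzd : TopologicalSpace.IsTopologicalBasis {U : Set K | IsClopen U})
    {x y : K} (hxy : x < y) : ∃ c, x ≤ c ∧ c < y ∧ IsClopen (Iic c) := by
  obtain ⟨U, hU, hxU, hUy⟩ := hKzd.exists_subset_of_mem_open (mem_Iio.mpr hxy) isOpen_Iio
  have hU : IsClopen U := hU
  have hUc : IsCompact (U ∩ Icc x y) := (hU.isClosed.inter isClosed_Icc).isCompact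
  obtain ⟨c, hcmem, hcub⟩ := hUc.exists_isGreatest ⟨x, hxU, left_mem_Icc.mpr hxy.le⟩
  have hcU : c ∈ U := hcmem.1
  have hcy : c < y := hUy hcU
  have hxc : x ≤ c := hcmem.2.1
  have hVc : IsCompact (Uᶜ ∩ Icc c y) := (hU.compl.isClosed.inter isClosed_Icc).isCompact
  have hyU : y ∉ U := fun h => lt_irrefl y (hUy h)
  obtain ⟨d, hdmem, hdlb⟩ := hVc.exists_isLeast ⟨y, hyU, hcy.le, le_refl y⟩
  have hcd : c < d := lt_of_le_of_ne hdmem.2.1 (by rintro rfl; exact hdmem.1 hcU)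
  have hIic : Iic c = Iio d := by
    ext z
    constructor
    · exact fun hz => lt_of_le_of_lt hz hcd
    · intro hz
      by_contra hzc
      simp only [mem_Iic, not_le] at hzc
      have hzy : z ≤ y := le_trans (le_of_lt hz) hdmem.2.2
      rcases em (z ∈ U) with hzU | hzU
      · exact absurd (hcub ⟨hzU, le_trans hxc hzc.le, hzy⟩) (not_le.mpr hzc)
      · exact absurd (hdlb ⟨hzU, hzc.le, hzy⟩) (not_le.mpr hz)
  exact ⟨c, hxc, hcy, ⟨isClosed_Iic, hIic ▸ isOpen_Iio⟩⟩

open Classical in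
noncomputable def clopInd {K : Type*} [TopologicalSpace K] (U : Set K) (hU : IsClopen U) :
    C(K, ℝ) :=
  ⟨fun x => if x ∈ U then (1 : ℝ) else 0, by
    apply continuous_if (fun a ha => ?_) continuous_const.continuousOn continuous_const.continuousOn
    have : frontier {x | x ∈ U} = ∅ := by
      show frontier U = ∅
      exact hU.frontier_eq
    rw [this] at ha
    exact absurd ha (notMem_empty a)⟩

open Classical in
lemma clopInd_apply {K : Type*} [TopologicalSpace K] (U : Set K) (hU : IsClopen U) (x : K) :
    clopInd U hU x = if x ∈ U then (1:ℝ) else 0 := rfl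

lemma int_est {X : Type*} [TopologicalSpace X] [CompactSpace X] [MeasurableSpace X]
    [OpensMeasurableSpace X]
    (m : Measure X) [IsFiniteMeasure m] (f : C(X, ℝ)) {A V : Set X}
    (hA : MeasurableSet A) (hVm : MeasurableSet V)
    (hf01 : ∀ x, f x ∈ Icc (0:ℝ) 1) (hfA : ∀ x ∈ A, f x = 1) (hfV : ∀ x ∉ V, f x = 0) :
    (m A).toReal ≤ ∫ x, f x ∂m ∧ ∫ x, f x ∂m ≤ (m A).toReal + (m (V \ A)).toReal := by
  have hfi : Integrable (fun x => f x) m :=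
    f.continuous.integrable_of_hasCompactSupport (HasCompactSupport.of_compactSpace _)
  have h1 : Integrable (A.indicator (fun _ => (1:ℝ))) m := (integrable_const 1).indicator hA
  have h2 : Integrable ((V \ A).indicator (fun _ => (1:ℝ))) m :=
    (integrable_const 1).indicator (hVm.diff hA)
  constructor
  · have : (m A).toReal = ∫ x, A.indicator (fun _ => (1:ℝ)) x ∂m := by
      rw [integral_indicator_const (1:ℝ) hA, smul_eq_mul, mul_one]; rfl
    rw [this]
    refine integral_mono h1 hfi (fun x => ?_)
    by_cases hx : x ∈ A
    · simp [Set.indicator_of_mem hx, hfA x hx]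
    · simp [Set.indicator_of_notMem hx, (hf01 x).1]
  · have hle : ∀ x, f x ≤ A.indicator (fun _ => (1:ℝ)) x + (V \ A).indicator (fun _ => (1:ℝ)) x := by
      intro x
      by_cases hxA : x ∈ A
      · have hfx : f x = 1 := hfA x hxA
        have h0 : (0:ℝ) ≤ (V \ A).indicator (fun _ => (1:ℝ)) x :=
          Set.indicator_nonneg (fun _ _ => zero_le_one) x
        rw [Set.indicator_of_mem hxA]
        linarith
      · by_cases hxV : x ∈ V
        · simp [Set.indicator_of_notMem hxA, Set.indicator_of_mem (show x ∈ V \ A from ⟨hxV, hxA⟩),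
            (hf01 x).2]
        · simp [Set.indicator_of_notMem hxA,
            Set.indicator_of_notMem (show x ∉ V \ A from fun h => hxV h.1), hfV x hxV]
    calc ∫ x, f x ∂m
        ≤ ∫ x, (A.indicator (fun _ => (1:ℝ)) x + (V \ A).indicator (fun _ => (1:ℝ)) x) ∂m :=
          integral_mono hfi (h1.add h2) hle
      _ = (m A).toReal + (m (V \ A)).toReal := by
          rw [integral_add h1 h2, integral_indicator_const (1:ℝ) hA,
            integral_indicator_const (1:ℝ) (hVm.diff hA), smul_eq_mul, smul_eq_mul, mul_one, mul_one]; rfl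

/-- Integral of a continuous function against a signed measure. -/
noncomputable def sint {K : Type*} [TopologicalSpace K] [MeasurableSpace K]
    (μ : SignedMeasure K) (f : C(K, ℝ)) : ℝ :=
  ∫ x, f x ∂μ.toJordanDecomposition.posPart - ∫ x, f x ∂μ.toJordanDecomposition.negPart

theorem stmt17 {K L : Type*}
    [LinearOrder K] [TopologicalSpace K] [OrderTopology K] [CompactSpace K] [Nonempty K]
    [MeasurableSpace K] [BorelSpace K]
    [LinearOrder L] [TopologicalSpace L] [OrderTopology L] [CompactSpace L] [Nonempty L]
    [MeasurableSpace L] [BorelSpace L]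
    (hKzd : TopologicalSpace.IsTopologicalBasis {U : Set K | IsClopen U})
    (q : K → L) (hqc : Continuous q) (hqm : Monotone q) (hqs : Function.Surjective q)
    (μ : ℕ → SignedMeasure L) (hreg : ∀ n, (μ n).totalVariation.Regular)
    -- `(μₙ)` is weak*-null
    (hnull : ∀ f : C(L, ℝ), Tendsto (fun n => sint (μ n) f) atTop (𝓝 0))
    -- `T' : C(K) → c₀` is a bounded operator with `T' ∘ q* = T`,
    -- where `T` is the operator associated with `(μₙ)`
    (T' : C(K, ℝ) →L[ℝ] C₀(ℕ, ℝ))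
    (hT' : ∀ (f : C(L, ℝ)) (n : ℕ), T' (f.comp ⟨q, hqc⟩) n = sint (μ n) f) :
    ∃ E : Set L, E.Countable ∧ E ⊆ {t : L | ∃ x y : K, q x = t ∧ q y = t ∧ x ≠ y} ∧
      ∀ t ∈ {t : L | ∃ x y : K, q x = t ∧ q y = t ∧ x ≠ y} \ E,
        Tendsto (fun n => μ n (Set.Iic t)) atTop (𝓝 0) := by
  classical
  set Q : Set L := {t : L | ∃ x y : K, q x = t ∧ q y = t ∧ x ≠ y} with hQdef
  set C := ‖T'‖ with hCdef
  have hCpos : 0 ≤ C := by rw [hCdef]; exact norm_nonneg T'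
  -- evaluation bound
  have heval : ∀ (g : C(K,ℝ)) (n : ℕ), |T' g n| ≤ C * ‖g‖ := by
    intro g n
    calc |T' g n| = ‖(T' g).toBCF n‖ := rfl
      _ ≤ ‖(T' g).toBCF‖ := BoundedContinuousFunction.norm_coe_le_norm _ n
      _ = ‖T' g‖ := ZeroAtInftyContinuousMap.norm_toBCF_eq_norm
      _ ≤ C * ‖g‖ := by rw [hCdef]; exact T'.le_opNorm g
  -- choice of the "splitting" indicator functions
  have hGex : ∀ t : L, ∃ G : C(K, ℝ), t ∈ Q →
      ((∀ x, G x = 0 ∨ G x = 1) ∧ (∀ x, q x < t → G x = 1) ∧ (∀ x, G x = 1 → q x ≤ t)) := by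
    intro t
    by_cases ht : t ∈ Q
    · obtain ⟨x, y, hx, hy, hxy⟩ := ht
      have hab : ∃ a b : K, a < b ∧ q a = t ∧ q b = t := by
        rcases lt_or_gt_of_ne hxy with h | h
        exacts [⟨x, y, h, hx, hy⟩, ⟨y, x, h, hy, hx⟩]
      obtain ⟨a, b, hab, ha, hb⟩ := hab
      obtain ⟨c, hac, hcb, hclop⟩ := jump_lemma hKzd hab
      refine ⟨clopInd _ hclop, fun _ => ⟨?_, ?_, ?_⟩⟩
      · intro z
        by_cases hz : z ∈ Iic c
        · right
          rw [clopInd_apply, if_pos hz]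
        · left
          rw [clopInd_apply, if_neg hz]
      · intro z hz
        have hzc : z ≤ c := by
          by_contra hcz
          push_neg at hcz
          have : q a ≤ q z := hqm (le_trans hac hcz.le)
          rw [ha] at this
          exact absurd hz (not_lt.mpr this)
        rw [clopInd_apply, if_pos (mem_Iic.mpr hzc)]
      · intro z hz
        have hzc : z ∈ Iic c := by
          by_contra h
          rw [clopInd_apply, if_neg h] at hz
          norm_num at hz
        calc q z ≤ q b := hqm (le_trans hzc hcb.le)
          _ = t := hb
    · exact ⟨0, fun h => absurd h ht⟩
  choose G hG using hGex
  set qm : C(K, L) := ⟨q, hqc⟩ with hqm'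
  -- the key uniform estimate
  have key : ∀ (n : ℕ) (S : Finset L), ↑S ⊆ Q → ∀ δ : ℝ, 0 < δ →
      ∑ t ∈ S, |μ n (Iic t) - T' (G t) n| ≤ C + δ := by
    intro n S hSQ δ hδ
    have hδ' : 0 < δ / (S.card + 1) := by positivity
    haveI : ((μ n).totalVariation).Regular := hreg n
    -- choose the Urysohn functions
    have hfex : ∀ t : L, ∃ f : C(L, ℝ), t ∈ S →
        ((∀ x, f x ∈ Icc (0:ℝ) 1) ∧ (∀ x ∈ Iic t, f x = 1) ∧
         (∀ s ∈ S, t < s → ∀ z, f z ≠ 0 → z < s) ∧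
         |μ n (Iic t) - sint (μ n) f| ≤ δ / (S.card + 1)) := by
      intro t
      by_cases htS : t ∈ S
      swap
      · exact ⟨1, fun h => absurd h htS⟩
      obtain ⟨W, hWo, hIW, hWs⟩ : ∃ W : Set L, IsOpen W ∧ Iic t ⊆ W ∧
          ∀ s ∈ S, t < s → W ⊆ Iio s := by
        by_cases hne : (S.filter (fun s => t < s)).Nonempty
        · refine ⟨Iio ((S.filter (fun s => t < s)).min' hne), isOpen_Iio, ?_, ?_⟩
          · intro z hz
            have ht' : t < (S.filter (fun s => t < s)).min' hne :=
              (Finset.mem_filter.mp ((S.filter (fun s => t < s)).min'_mem hne)).2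
            exact lt_of_le_of_lt hz ht'
          · intro s hs hts z hz
            exact lt_of_lt_of_le hz (Finset.min'_le _ _ (Finset.mem_filter.mpr ⟨hs, hts⟩))
        · refine ⟨univ, isOpen_univ, subset_univ _, fun s hs hts => absurd ?_ hne⟩
          exact ⟨s, Finset.mem_filter.mpr ⟨hs, hts⟩⟩
      have hIicM : MeasurableSet (Iic t) := measurableSet_Iic
      obtain ⟨U, hAU, hUo, hUfin, hUd⟩ := hIicM.exists_isOpen_diff_lt
        (measure_ne_top ((μ n).totalVariation) _)
        (show ENNReal.ofReal (δ / (S.card + 1)) ≠ 0 by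
          simp only [ne_eq, ENNReal.ofReal_eq_zero, not_le]; positivity)
      set V := U ∩ W with hV
      have hIV : Iic t ⊆ V := subset_inter hAU hIW
      have hVd : (μ n).totalVariation (V \ Iic t) < ENNReal.ofReal (δ / (S.card + 1)) :=
        lt_of_le_of_lt (measure_mono (diff_subset_diff_left inter_subset_left)) hUd
      obtain ⟨f, hf0, hf1, hf01⟩ := exists_continuous_zero_one_of_isClosed
        (hUo.inter hWo).isClosed_compl isClosed_Iic
        (Set.disjoint_left.mpr fun a haV hat => haV (hIV hat))
      have hf0' : ∀ z ∉ V, f z = 0 := fun z hz => hf0 hz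
      have hf1' : ∀ z ∈ Iic t, f z = 1 := fun z hz => hf1 hz
      refine ⟨f, fun _ => ⟨hf01, hf1', ?_, ?_⟩⟩
      · intro s hs hts z hz
        have hzV : z ∈ V := by
          by_contra hzV
          exact hz (hf0' z hzV)
        exact hWs s hs hts hzV.2
      · -- the integral estimate
        have hVM : MeasurableSet V := (hUo.inter hWo).measurableSet
        have hpos := int_est (μ n).toJordanDecomposition.posPart f hIicM hVM hf01 hf1' hf0'
        have hneg := int_est (μ n).toJordanDecomposition.negPart f hIicM hVM hf01 hf1' hf0'
        have happly : μ n (Iic t) = ((μ n).toJordanDecomposition.posPart (Iic t)).toReal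
            - ((μ n).toJordanDecomposition.negPart (Iic t)).toReal := by
          calc μ n (Iic t) = (μ n).toJordanDecomposition.toSignedMeasure (Iic t) := by
                rw [(μ n).toSignedMeasure_toJordanDecomposition]
            _ = _ := by
                show ((μ n).toJordanDecomposition.posPart.toSignedMeasure
                  - (μ n).toJordanDecomposition.negPart.toSignedMeasure) (Iic t) = _
                rw [VectorMeasure.sub_apply, Measure.toSignedMeasure_apply_measurable hIicM,
                  Measure.toSignedMeasure_apply_measurable hIicM]; rfl
        have hsint : sint (μ n) f
            = (∫ x, f x ∂(μ n).toJordanDecomposition.posPart)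
            - (∫ x, f x ∂(μ n).toJordanDecomposition.negPart) := rfl
        have hνapp : (μ n).totalVariation (V \ Iic t)
            = (μ n).toJordanDecomposition.posPart (V \ Iic t)
            + (μ n).toJordanDecomposition.negPart (V \ Iic t) := by
          show ((μ n).toJordanDecomposition.posPart + (μ n).toJordanDecomposition.negPart) _ = _
          rw [Measure.add_apply]
        have h1 : ((μ n).totalVariation (V \ Iic t)).toReal ≤ δ / (S.card + 1) :=
          ENNReal.toReal_le_of_le_ofReal hδ'.le hVd.le
        have h2 : ((μ n).toJordanDecomposition.posPart (V \ Iic t)).toReal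
            + ((μ n).toJordanDecomposition.negPart (V \ Iic t)).toReal
            = ((μ n).totalVariation (V \ Iic t)).toReal := by
          rw [hνapp, ENNReal.toReal_add (measure_ne_top _ _) (measure_ne_top _ _)]
        rw [happly, hsint]
        obtain ⟨e1, e2⟩ := hpos
        obtain ⟨e3, e4⟩ := hneg
        rw [abs_le]
        constructor <;> [linarith; linarith]
    choose f hf using hfex
    set h : L → C(K, ℝ) := fun t => (f t).comp qm - G t with hhdef
    have hhx : ∀ t x, h t x = f t (q x) - G t x := by
      intro t x
      simp [hhdef, hqm']
    -- pointwise bounds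
    have hpt : ∀ t ∈ S, ∀ x : K,
        (0 ≤ h t x ∧ h t x ≤ 1) ∧ (h t x ≠ 0 → t ≤ q x ∧ f t (q x) ≠ 0) := by
      intro t htS x
      obtain ⟨hGval, hGlt, hGle⟩ := hG t (hSQ htS)
      obtain ⟨hf01, hf1, hfsupp, hfest⟩ := hf t htS
      rcases lt_or_ge (q x) t with hlt | hge
      · have hG1 : G t x = 1 := hGlt x hlt
        have h0 : h t x = 0 := by
          rw [hhx, hG1, hf1 (q x) (le_of_lt hlt), sub_self]
        rw [h0]
        exact ⟨⟨le_refl 0, zero_le_one⟩, fun hc => absurd rfl hc⟩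
      · rcases hGval x with hg0 | hg1
        · have hhval : h t x = f t (q x) := by rw [hhx, hg0, sub_zero]
          rw [hhval]
          exact ⟨⟨(hf01 _).1, (hf01 _).2, ⟩, fun hne => ⟨hge, hne⟩⟩
        · have hqt : q x ≤ t := hGle x hg1
          have h0 : h t x = 0 := by
            rw [hhx, hg1, hf1 (q x) hqt, sub_self]
          rw [h0]
          exact ⟨⟨le_refl 0, zero_le_one⟩, fun hc => absurd rfl hc⟩
    -- disjoint supports
    have hdisj' : ∀ x : K, ∀ t ∈ S, ∀ s ∈ S, t < s → h t x ≠ 0 → h s x = 0 := by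
      intro x t htS s hsS hts hht
      by_contra hhs
      obtain ⟨hts', hft⟩ := (hpt t htS x).2 hht
      obtain ⟨hss', -⟩ := (hpt s hsS x).2 hhs
      have : q x < s := (hf t htS).2.2.1 s hsS hts (q x) hft
      exact absurd hss' (not_le.mpr this)
    have hdisj : ∀ x : K, ∀ t ∈ S, ∀ s ∈ S, s ≠ t → h t x ≠ 0 → h s x = 0 := by
      intro x t htS s hsS hne hht
      rcases hne.lt_or_gt with hst | hts
      · by_contra hhs
        exact absurd (hdisj' x s hsS t htS hst hhs) hht
      · exact hdisj' x t htS s hsS hts hht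
    set σ : L → ℝ := fun t => if 0 ≤ T' (h t) n then 1 else -1 with hσdef
    have hσ1 : ∀ t, |σ t| = 1 := by
      intro t
      by_cases h0 : 0 ≤ T' (h t) n <;> simp [hσdef, h0]
    have hσmul : ∀ t, σ t * T' (h t) n = |T' (h t) n| := by
      intro t
      by_cases h0 : 0 ≤ T' (h t) n
      · rw [abs_of_nonneg h0]; simp [hσdef, h0]
      · rw [abs_of_neg (not_le.mp h0)]; simp [hσdef, h0]
    set F : C(K, ℝ) := ∑ t ∈ S, σ t • h t with hFdef
    have hFeval : ∀ x : K, F x = ∑ t ∈ S, σ t * h t x := by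
      intro x
      rw [hFdef]
      simp [ContinuousMap.coe_sum]
    have hFx : ∀ x : K, |F x| ≤ 1 := by
      intro x
      by_cases hex : ∃ t ∈ S, h t x ≠ 0
      · obtain ⟨t0, ht0S, ht0⟩ := hex
        have hsum : F x = σ t0 * h t0 x := by
          rw [hFeval]
          refine Finset.sum_eq_single_of_mem t0 ht0S (fun s hs hne => ?_)
          rw [hdisj x t0 ht0S s hs hne ht0, mul_zero]
        rw [hsum, abs_mul, hσ1 t0, one_mul, abs_of_nonneg ((hpt t0 ht0S x).1.1)]
        exact (hpt t0 ht0S x).1.2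
      · push_neg at hex
        have : F x = 0 := by
          rw [hFeval]
          exact Finset.sum_eq_zero (fun t ht => by rw [hex t ht, mul_zero])
        rw [this, abs_zero]
        exact zero_le_one
    have hFnorm : ‖F‖ ≤ 1 :=
      (ContinuousMap.norm_le F zero_le_one).mpr (fun x => by
        rw [Real.norm_eq_abs]; exact hFx x)
    -- sum of evaluations
    have hevalsum : ∀ (s : Finset L) (g : L → C₀(ℕ, ℝ)), (∑ t ∈ s, g t) n = ∑ t ∈ s, g t n := by
      intro s g
      induction s using Finset.induction_on with
      | empty => simp
      | insert a s hns ih =>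
        rw [Finset.sum_insert hns, Finset.sum_insert hns, ← ih]
        simp
    have hTF : ∑ t ∈ S, |T' (h t) n| ≤ C := by
      have h1 : T' F = ∑ t ∈ S, σ t • T' (h t) := by
        rw [hFdef, map_sum]
        exact Finset.sum_congr rfl (fun t _ => by rw [_root_.map_smul])
      have h2 : T' F n = ∑ t ∈ S, σ t * T' (h t) n := by
        rw [h1, hevalsum]
        exact Finset.sum_congr rfl (fun t _ => by simp)
      calc ∑ t ∈ S, |T' (h t) n| = T' F n := by
            rw [h2]
            exact Finset.sum_congr rfl (fun t _ => (hσmul t).symm)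
        _ ≤ |T' F n| := le_abs_self _
        _ ≤ C * ‖F‖ := heval F n
        _ ≤ C * 1 := mul_le_mul_of_nonneg_left hFnorm hCpos
        _ = C := mul_one C
    -- assemble
    calc ∑ t ∈ S, |μ n (Iic t) - T' (G t) n|
        ≤ ∑ t ∈ S, (|μ n (Iic t) - sint (μ n) (f t)| + |T' (h t) n|) := by
          refine Finset.sum_le_sum (fun t htS => ?_)
          have h1 : T' ((f t).comp qm) n = sint (μ n) (f t) := hT' (f t) n
          have h2 : T' (h t) n = T' ((f t).comp qm) n - T' (G t) n := by
            rw [hhdef]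
            simp [map_sub]
          calc |μ n (Iic t) - T' (G t) n|
              = |(μ n (Iic t) - sint (μ n) (f t)) + T' (h t) n| := by
                rw [h2, h1]; ring_nf
            _ ≤ |μ n (Iic t) - sint (μ n) (f t)| + |T' (h t) n| := abs_add_le _ _
      _ = ∑ t ∈ S, |μ n (Iic t) - sint (μ n) (f t)| + ∑ t ∈ S, |T' (h t) n| :=
          Finset.sum_add_distrib
      _ ≤ δ + C := by
          have hs1 : ∑ t ∈ S, |μ n (Iic t) - sint (μ n) (f t)| ≤ S.card * (δ / (S.card + 1)) := by
            have := Finset.sum_le_card_nsmul S (fun t => |μ n (Iic t) - sint (μ n) (f t)|)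
              (δ / (S.card + 1)) (fun t ht => (hf t ht).2.2.2)
            simpa [nsmul_eq_mul] using this
          have hs2 : (S.card : ℝ) * (δ / (S.card + 1)) ≤ δ := by
            rw [mul_div_assoc', div_le_iff₀ (by positivity)]
            nlinarith [Nat.cast_nonneg (α := ℝ) S.card]
          linarith
      _ = C + δ := add_comm δ C
  -- the countable exceptional set
  set bad : ℕ → ℕ → Set L := fun n k =>
    {t | t ∈ Q ∧ 1 / ((k:ℝ) + 1) ≤ |μ n (Iic t) - T' (G t) n|} with hbaddef
  have hbadfin : ∀ n k, (bad n k).Finite := by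
    intro n k
    by_contra hinf
    have hinf : (bad n k).Infinite := hinf
    obtain ⟨s, hsub, hcard⟩ := hinf.exists_subset_card_eq (⌈(C + 1) * ((k:ℝ) + 1)⌉₊ + 1)
    have hsQ : ↑s ⊆ Q := fun t ht => (hsub ht).1
    have hkey := key n s hsQ 1 one_pos
    have hk1 : (0:ℝ) < (k:ℝ) + 1 := by positivity
    have hlb : (s.card : ℝ) * (1 / ((k:ℝ) + 1)) ≤ ∑ t ∈ s, |μ n (Iic t) - T' (G t) n| := by
      have := Finset.card_nsmul_le_sum s (fun t => |μ n (Iic t) - T' (G t) n|)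
        (1 / ((k:ℝ) + 1)) (fun t ht => (hsub ht).2)
      simpa [nsmul_eq_mul] using this
    have hcardgt : (C + 1) * ((k:ℝ) + 1) < (s.card : ℝ) := by
      rw [hcard]
      push_cast
      have := Nat.le_ceil ((C + 1) * ((k:ℝ) + 1))
      linarith
    have : C + 1 < (s.card : ℝ) * (1 / ((k:ℝ) + 1)) := by
      rw [mul_one_div, lt_div_iff₀ hk1]
      exact hcardgt
    linarith
  refine ⟨⋃ n, ⋃ k, bad n k, ?_, ?_, ?_⟩
  · exact Set.countable_iUnion (fun n => Set.countable_iUnion (fun k => (hbadfin n k).countable))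
  · exact Set.iUnion_subset (fun n => Set.iUnion_subset (fun k t ht => ht.1))
  · rintro t ⟨htQ, htE⟩
    have hallz : ∀ n, μ n (Iic t) = T' (G t) n := by
      intro n
      by_contra hne
      have habs : 0 < |μ n (Iic t) - T' (G t) n| := abs_pos.mpr (sub_ne_zero.mpr hne)
      obtain ⟨k, hk⟩ := exists_nat_one_div_lt habs
      exact htE (mem_iUnion.mpr ⟨n, mem_iUnion.mpr ⟨k, ⟨htQ, hk.le⟩⟩⟩)
    have h0 : Tendsto (fun m => T' (G t) m) atTop (𝓝 0) := by
      have := zero_at_infty (T' (G t))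
      rwa [cocompact_eq_cofinite, Nat.cofinite_eq_atTop] at this
    exact Tendsto.congr (fun m => (hallz m).symm) h0
end
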